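/- arXiv:2003.13943 — 6 statements merged into one kernel-verified Lean document; each statement's English description precedes it below -/
import Mathlib

section
/- Let φ(z) = (z²−1) z^{N−1} Φ(z+z⁻¹) and ψ(z) = z^N Ψ(z+z⁻¹) be monic integer polynomials of degree 2N, where Φ has degree N−1 and Ψ has degree N. Then Res(φ, ψ) = (−1)^N · Ψ(2) · Ψ(−2) · Res(Φ, Ψ)². -/
open Polynomial

noncomputable def res (f g : Polynomial ℤ) : ℂ :=
  (((f.map (Int.castRingHom ℂ)).roots).map fun a => Polynomial.aeval a g).prod

namespace Stmt3Aux

noncomputable def q (w : ℂ) : Polynomial ℂ := X ^ 2 - C w * X + 1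

lemma q_monic (w : ℂ) : (q w).Monic := by
  unfold q; monicity!

lemma q_natDegree (w : ℂ) : (q w).natDegree = 2 := by
  unfold q; compute_degree!

lemma q_card (w : ℂ) : (q w).roots.card = 2 := by
  rw [← q_natDegree w]
  exact splits_iff_card_roots.mp (IsAlgClosed.splits _)

lemma q_prod_roots (w : ℂ) : (q w).roots.prod = 1 := by
  have h := (IsAlgClosed.splits _).eq_prod_roots_of_monic (q_monic w)
  have h0 := congrArg (eval 0) h
  rw [eval_multiset_prod, Multiset.map_map] at h0
  have hL : (q w).eval 0 = 1 := by simp [q]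
  rw [hL] at h0
  simp only [Function.comp, eval_sub, eval_X, eval_C, zero_sub] at h0
  have h1 : ((q w).roots.map fun a : ℂ => -a).prod = ((q w).roots.map Neg.neg).prod := rfl
  rw [h1, Multiset.prod_map_neg, q_card] at h0
  simpa [Multiset.map_id'] using h0.symm

lemma q_root_ne_zero {w a : ℂ} (ha : a ∈ (q w).roots) : a ≠ 0 := by
  rintro rfl
  have := isRoot_of_mem_roots ha
  simp [q, IsRoot] at this

lemma q_root_add_inv {w a : ℂ} (ha : a ∈ (q w).roots) : a + a⁻¹ = w := by
  have h0 : a ≠ 0 := q_root_ne_zero ha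
  have := isRoot_of_mem_roots ha
  simp only [q, IsRoot, eval_add, eval_sub, eval_pow, eval_mul, eval_X, eval_C, eval_one] at this
  field_simp
  linear_combination this

end Stmt3Aux

open Stmt3Aux

/-- For φ(z) = (z²−1) z^{N−1} Φ(z+z⁻¹) and ψ(z) = z^N Ψ(z+z⁻¹) of degree 2N,
Res(φ, ψ) = (−1)^N · Ψ(2) · Ψ(−2) · Res(Φ, Ψ)². -/
theorem stmt_3 (N : ℕ) (hN : 0 < N) (φ ψ Φ Ψ : Polynomial ℤ)
    (hφm : φ.Monic) (hψm : ψ.Monic) (hΦm : Φ.Monic) (hΨm : Ψ.Monic)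
    (hφd : φ.natDegree = 2 * N) (hψd : ψ.natDegree = 2 * N)
    (hΦd : Φ.natDegree = N - 1) (hΨd : Ψ.natDegree = N)
    (hφ : ∀ z : ℂ, z ≠ 0 →
      Polynomial.aeval z φ = (z ^ 2 - 1) * z ^ (N - 1) * Polynomial.aeval (z + z⁻¹) Φ)
    (hψ : ∀ z : ℂ, z ≠ 0 → Polynomial.aeval z ψ = z ^ N * Polynomial.aeval (z + z⁻¹) Ψ) :
    res φ ψ = (-1) ^ N * ((Ψ.eval 2 : ℤ) : ℂ) * ((Ψ.eval (-2) : ℤ) : ℂ) * (res Φ Ψ) ^ 2 := by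
  classical
  set ι : ℤ →+* ℂ := Int.castRingHom ℂ with hι
  have hev : ∀ (p : Polynomial ℤ) (z : ℂ), (p.map ι).eval z = Polynomial.aeval z p := by
    intro p z
    rw [eval_map, aeval_def, hι, algebraMap_int_eq]
  set f : Polynomial ℂ := φ.map ι with hf
  set F : Polynomial ℂ := Φ.map ι with hF
  have hFm : F.Monic := hΦm.map ι
  have hFd : F.natDegree = N - 1 := by rw [hF, hΦm.natDegree_map, hΦd]
  have hcard : F.roots.card = N - 1 := by
    rw [← hFd]; exact splits_iff_card_roots.mp (IsAlgClosed.splits _)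
  have hFfac : F = (F.roots.map fun a => X - C a).prod :=
    (IsAlgClosed.splits _).eq_prod_roots_of_monic hFm
  set g : Polynomial ℂ :=
    (X - C 1) * (X - C (-1)) * (F.roots.map fun w => q w).prod with hg
  -- f = g
  have hfg : f = g := by
    have hzero : f - g = 0 := by
      apply eq_zero_of_infinite_isRoot
      apply Set.Infinite.mono (s := {z : ℂ | z ≠ 0})
      · intro z hz
        have hz' : (z : ℂ) ≠ 0 := hz
        simp only [Set.mem_setOf_eq, IsRoot, eval_sub]
        have hF_eval : F.eval (z + z⁻¹) = (F.roots.map fun w => z + z⁻¹ - w).prod := by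
          conv_lhs => rw [hFfac]
          rw [eval_multiset_prod, Multiset.map_map]
          simp [Function.comp]
        have hfz : f.eval z = (z ^ 2 - 1) * z ^ (N - 1) *
            (F.roots.map fun w => z + z⁻¹ - w).prod := by
          rw [hev, hφ z hz', ← hF_eval, hev]
        have hgz : g.eval z = (z - 1) * (z - (-1)) *
            (F.roots.map fun w => z ^ 2 - w * z + 1).prod := by
          have hm : ((F.roots.map fun w => q w).map (eval z)) =
              F.roots.map fun w => z ^ 2 - w * z + 1 := by
            rw [Multiset.map_map]
            apply Multiset.map_congr rfl
            intro w _
            simp [q]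
          rw [hg, eval_mul, eval_mul, eval_multiset_prod, hm]
          simp
        have key : (F.roots.map fun w => z ^ 2 - w * z + 1).prod =
            z ^ (N - 1) * (F.roots.map fun w => z + z⁻¹ - w).prod := by
          have h1 : (F.roots.map fun w => z ^ 2 - w * z + 1) =
              F.roots.map fun w => z * (z + z⁻¹ - w) := by
            apply Multiset.map_congr rfl
            intro w _
            field_simp
            ring
          rw [h1]
          have h2 : (F.roots.map fun w => z * (z + z⁻¹ - w)).prod =
              (F.roots.map fun _ => z).prod * (F.roots.map fun w => z + z⁻¹ - w).prod :=
            Multiset.prod_map_mul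
          rw [h2, Multiset.map_const', Multiset.prod_replicate, hcard]
        rw [hfz, hgz, key]
        ring
      · have : ({z : ℂ | z ≠ 0}) = ({0} : Set ℂ)ᶜ := by ext z; simp
        rw [this]
        exact (Set.finite_singleton 0).infinite_compl
    exact sub_eq_zero.mp hzero
  -- roots of g
  have hq0 : (0 : Polynomial ℂ) ∉ F.roots.map fun w => q w := by
    intro h
    obtain ⟨w, _, hw⟩ := Multiset.mem_map.mp h
    exact (q_monic w).ne_zero hw
  have hprodne : (F.roots.map fun w => q w).prod ≠ 0 := by
    intro h
    exact hq0 (Multiset.prod_eq_zero_iff.mp h)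
  have hroots : f.roots = {1} + {-1} + F.roots.bind fun w => (q w).roots := by
    rw [hfg, hg, roots_mul (by
        apply mul_ne_zero (mul_ne_zero (X_sub_C_ne_zero 1) (X_sub_C_ne_zero (-1))) hprodne),
      roots_mul (mul_ne_zero (X_sub_C_ne_zero 1) (X_sub_C_ne_zero (-1))),
      roots_X_sub_C, roots_X_sub_C, roots_multiset_prod _ hq0, Multiset.bind_map]
  -- now compute the product
  have hres : res φ ψ = ((f.roots).map fun a => Polynomial.aeval a ψ).prod := rfl
  rw [hres, hroots]
  rw [Multiset.map_add, Multiset.map_add, Multiset.prod_add, Multiset.prod_add]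
  have h1 : (({1} : Multiset ℂ).map fun a => Polynomial.aeval a ψ).prod =
      ((Ψ.eval 2 : ℤ) : ℂ) := by
    simp only [Multiset.map_singleton, Multiset.prod_singleton]
    rw [hψ 1 one_ne_zero]
    norm_num
    rw [show ((2 : ℂ)) = ((2 : ℤ) : ℂ) by norm_num, ← hev, eval_intCast_map]
    norm_num
  have h2 : (({-1} : Multiset ℂ).map fun a => Polynomial.aeval a ψ).prod =
      (-1) ^ N * ((Ψ.eval (-2) : ℤ) : ℂ) := by
    simp only [Multiset.map_singleton, Multiset.prod_singleton]
    rw [hψ (-1) (by norm_num)]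
    have : (-1 : ℂ) + (-1 : ℂ)⁻¹ = -2 := by norm_num
    rw [this]
    rw [show ((-2 : ℂ)) = ((-2 : ℤ) : ℂ) by norm_num, ← hev, eval_intCast_map]
    norm_num
  have h3 : ((F.roots.bind fun w => (q w).roots).map fun a => Polynomial.aeval a ψ).prod =
      (res Φ Ψ) ^ 2 := by
    rw [Multiset.map_bind, Multiset.prod_bind]
    have hinner : ∀ w ∈ F.roots,
        (((q w).roots).map fun a => Polynomial.aeval a ψ).prod = (Polynomial.aeval w Ψ) ^ 2 := by
      intro w _
      have hmc : ((q w).roots).map (fun a => Polynomial.aeval a ψ) =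
          ((q w).roots).map fun a => a ^ N * Polynomial.aeval w Ψ := by
        apply Multiset.map_congr rfl
        intro a ha
        rw [hψ a (q_root_ne_zero ha), q_root_add_inv ha]
      rw [hmc]
      have : (((q w).roots).map fun a => a ^ N * Polynomial.aeval w Ψ).prod =
          (((q w).roots).map fun a => a ^ N).prod *
            (((q w).roots).map fun _ => Polynomial.aeval w Ψ).prod := Multiset.prod_map_mul
      rw [this, Multiset.prod_map_pow, Multiset.map_id', q_prod_roots, one_pow, one_mul,
        Multiset.map_const', Multiset.prod_replicate, q_card]
    rw [Multiset.map_congr rfl hinner]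
    have : (F.roots.map fun w => (Polynomial.aeval w Ψ) ^ 2).prod =
        ((F.roots.map fun w => Polynomial.aeval w Ψ).prod) ^ 2 := Multiset.prod_map_pow
    rw [this]
    rfl
  rw [h1, h2, h3]
  ring
end

section
/- Let φ(z) = (z−1) z^N Φ(z+z⁻¹) and ψ(z) = (z+1) z^N Ψ(z+z⁻¹) be monic integer polynomials of odd degree 2N+1, where Φ and Ψ have degree N. Then Res(φ, ψ) = 2(−1)^N · Ψ(2) · Φ(−2) · Res(Φ, Ψ)². -/
open Polynomial

private lemma quad_monic (w : ℂ) : (X ^ 2 - C w * X + 1 : ℂ[X]).Monic := by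
  monicity!

private lemma quad_roots (w : ℂ) :
    ∃ a b : ℂ, (X ^ 2 - C w * X + 1 : ℂ[X]).roots = {a, b} ∧ a * b = 1 ∧ a + b = w := by
  set q : ℂ[X] := X ^ 2 - C w * X + 1 with hq
  have hm : q.Monic := quad_monic w
  have hd : q.natDegree = 2 := by unfold q; compute_degree!
  have hcard : Multiset.card q.roots = 2 := by
    rw [splits_iff_card_roots.mp (IsAlgClosed.splits q), hd]
  obtain ⟨a, b, hab⟩ := Multiset.card_eq_two.mp hcard
  have hfact : q = (X - C a) * (X - C b) := by
    conv_lhs => rw [(IsAlgClosed.splits q).eq_prod_roots_of_monic hm]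
    rw [hab]; simp
  have h0 := congrArg (eval 0) hfact
  have h1 := congrArg (eval 1) hfact
  simp [hq] at h0 h1
  exact ⟨a, b, hab, h0.symm, by linear_combination h1 - h0⟩

private lemma aeval_eq_eval_map (p : Polynomial ℤ) (u : ℂ) :
    Polynomial.aeval u p = eval u (p.map (Int.castRingHom ℂ)) := by
  rw [aeval_def, eval_map, algebraMap_int_eq]

/-- For φ(z) = (z−1) z^N Φ(z+z⁻¹) and ψ(z) = (z+1) z^N Ψ(z+z⁻¹) of odd
degree 2N+1, Res(φ, ψ) = 2(−1)^N · Ψ(2) · Φ(−2) · Res(Φ, Ψ)². -/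
theorem stmt_4 (N : ℕ) (φ ψ Φ Ψ : Polynomial ℤ)
    (hφm : φ.Monic) (hψm : ψ.Monic) (hΦm : Φ.Monic) (hΨm : Ψ.Monic)
    (hφd : φ.natDegree = 2 * N + 1) (hψd : ψ.natDegree = 2 * N + 1)
    (hΦd : Φ.natDegree = N) (hΨd : Ψ.natDegree = N)
    (hφ : ∀ z : ℂ, z ≠ 0 →
      Polynomial.aeval z φ = (z - 1) * z ^ N * Polynomial.aeval (z + z⁻¹) Φ)
    (hψ : ∀ z : ℂ, z ≠ 0 →
      Polynomial.aeval z ψ = (z + 1) * z ^ N * Polynomial.aeval (z + z⁻¹) Ψ) :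
    res φ ψ = 2 * (-1) ^ N * ((Ψ.eval 2 : ℤ) : ℂ) * ((Φ.eval (-2) : ℤ) : ℂ) *
      (res Φ Ψ) ^ 2 := by
  set φC := φ.map (Int.castRingHom ℂ) with hφC
  set ΦC := Φ.map (Int.castRingHom ℂ) with hΦC
  set W := ΦC.roots with hW
  have hΦCm : ΦC.Monic := hΦm.map _
  have hφCm : φC.Monic := hφm.map _
  have hWcard : Multiset.card W = N := by
    rw [hW, splits_iff_card_roots.mp (IsAlgClosed.splits ΦC),
      hΦC, hΦm.natDegree_map, hΦd]
  have hΦfact : ΦC = (W.map fun w => X - C w).prod :=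
    (IsAlgClosed.splits ΦC).eq_prod_roots_of_monic hΦCm
  have hevalΦ : ∀ u : ℂ, Polynomial.aeval u Φ = (W.map fun w => u - w).prod := by
    intro u
    rw [aeval_eq_eval_map, ← hΦC]
    conv_lhs => rw [hΦfact]
    rw [eval_multiset_prod, Multiset.map_map]
    simp
  -- the key factorization of φC
  set Q : ℂ[X] := (W.map fun w => X ^ 2 - C w * X + 1).prod with hQ
  have hQm : Q.Monic := by
    exact monic_multiset_prod_of_monic W _ (fun w _ => quad_monic w)
  have hquadprod : ∀ z : ℂ, z ≠ 0 →
      (W.map fun w => z ^ 2 - w * z + 1).prod = z ^ N * (W.map fun w => (z + z⁻¹) - w).prod := by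
    intro z hz
    have h1 : (W.map fun w => z ^ 2 - w * z + 1).prod
        = (W.map fun w => z * ((z + z⁻¹) - w)).prod := by
      apply congrArg
      apply Multiset.map_congr rfl
      intro w _
      field_simp
      ring
    rw [h1]
    have h2 : (fun w : ℂ => z * ((z + z⁻¹) - w)) =
        fun w => (fun _ : ℂ => z) w * (fun w : ℂ => (z + z⁻¹) - w) w := rfl
    rw [h2, Multiset.prod_map_mul, Multiset.map_const', Multiset.prod_replicate, hWcard]
  have hfact : φC = (X - 1) * Q := by
    have hdiff : φC - (X - 1) * Q = 0 := by
      apply eq_zero_of_infinite_isRoot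
      apply Set.Infinite.mono (s := ({0}ᶜ : Set ℂ))
      · intro z hz
        have hz' : z ≠ 0 := hz
        simp only [Set.mem_setOf_eq, IsRoot, eval_sub, eval_mul, eval_one, eval_X]
        have hev : eval z φC = (z - 1) * z ^ N * (W.map fun w => (z + z⁻¹) - w).prod := by
          rw [← aeval_eq_eval_map, hφ z hz', hevalΦ]
        have hevQ : eval z Q = (W.map fun w => z ^ 2 - w * z + 1).prod := by
          rw [hQ, eval_multiset_prod, Multiset.map_map]
          simp
        rw [hev, hevQ, hquadprod z hz']
        ring
      · exact (Set.finite_singleton (0 : ℂ)).infinite_compl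
    exact sub_eq_zero.mp hdiff
  -- roots of φC
  have hQne : (0 : ℂ[X]) ∉ W.map (fun w => X ^ 2 - C w * X + 1) := by
    intro h
    obtain ⟨w, _, hw⟩ := Multiset.mem_map.mp h
    exact (quad_monic w).ne_zero hw
  have hroots : φC.roots =
      1 ::ₘ W.bind (fun w => (X ^ 2 - C w * X + 1 : ℂ[X]).roots) := by
    rw [hfact, roots_mul (by rw [← hfact]; exact hφCm.ne_zero)]
    have h1 : (X - 1 : ℂ[X]).roots = {1} := by rw [← C_1, roots_X_sub_C]
    rw [h1, hQ, roots_multiset_prod _ hQne, Multiset.bind_map,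
      Multiset.singleton_add]
  -- res φ ψ as a product over W
  have hres : res φ ψ = (Polynomial.aeval (1 : ℂ) ψ) *
      (W.map fun w =>
        (((X ^ 2 - C w * X + 1 : ℂ[X]).roots).map fun a => Polynomial.aeval a ψ).prod).prod := by
    rw [res, ← hφC, hroots, Multiset.map_cons, Multiset.prod_cons,
      Multiset.map_bind, Multiset.prod_bind]
  -- inner product over the roots of each quadratic
  have hinner : ∀ w : ℂ,
      (((X ^ 2 - C w * X + 1 : ℂ[X]).roots).map fun a => Polynomial.aeval a ψ).prod
        = (w + 2) * (Polynomial.aeval w Ψ) ^ 2 := by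
    intro w
    obtain ⟨a, b, hr, hab, hsum⟩ := quad_roots w
    have ha : a ≠ 0 := left_ne_zero_of_mul_eq_one hab
    have hb : b ≠ 0 := right_ne_zero_of_mul_eq_one hab
    have hbinv : a⁻¹ = b := (eq_inv_of_mul_eq_one_right hab).symm
    have hainv : b⁻¹ = a := (eq_inv_of_mul_eq_one_left hab).symm
    have h1 : a + a⁻¹ = w := by rw [hbinv]; exact hsum
    have h2 : b + b⁻¹ = w := by rw [hainv]; linear_combination hsum
    rw [hr]
    simp only [Multiset.insert_eq_cons, Multiset.map_cons, Multiset.map_singleton,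
      Multiset.prod_cons, Multiset.prod_singleton]
    rw [hψ a ha, hψ b hb, h1, h2]
    have hab2 : (a + 1) * (b + 1) = w + 2 := by linear_combination hab + hsum
    calc (a + 1) * a ^ N * Polynomial.aeval w Ψ * ((b + 1) * b ^ N * Polynomial.aeval w Ψ)
        = ((a + 1) * (b + 1)) * (a * b) ^ N * (Polynomial.aeval w Ψ) ^ 2 := by ring
      _ = (w + 2) * (Polynomial.aeval w Ψ) ^ 2 := by rw [hab2, hab, one_pow]; ring
  -- value at 1
  have hΨ2 : Polynomial.aeval (2 : ℂ) Ψ = ((Ψ.eval 2 : ℤ) : ℂ) := by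
    rw [aeval_eq_eval_map, show (2 : ℂ) = ((2 : ℤ) : ℂ) by norm_num, eval_intCast_map]
    simp
  have hψ1 : Polynomial.aeval (1 : ℂ) ψ = 2 * ((Ψ.eval 2 : ℤ) : ℂ) := by
    rw [hψ 1 one_ne_zero]
    norm_num [hΨ2]
  -- product of (w + 2)
  have hΦ2 : Polynomial.aeval (-2 : ℂ) Φ = ((Φ.eval (-2) : ℤ) : ℂ) := by
    rw [aeval_eq_eval_map, show (-2 : ℂ) = ((-2 : ℤ) : ℂ) by norm_num, eval_intCast_map]
    simp
  have hone : ((-1 : ℂ)) ^ N * (-1) ^ N = 1 := by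
    rw [← pow_add, ← two_mul, pow_mul]; norm_num
  have hcastΦ : ((Φ.eval (-2) : ℤ) : ℂ) = (-1) ^ N * (W.map fun w => w + 2).prod := by
    rw [← hΦ2, hevalΦ (-2)]
    have h2 : (W.map fun w => (-2 : ℂ) - w) = (W.map fun w => (-1) * (w + 2)) :=
      Multiset.map_congr rfl (fun w _ => by ring)
    rw [h2, show (fun w : ℂ => (-1 : ℂ) * (w + 2)) =
        fun w => (fun _ : ℂ => (-1 : ℂ)) w * (fun w : ℂ => w + 2) w from rfl,
      Multiset.prod_map_mul, Multiset.map_const', Multiset.prod_replicate, hWcard]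
  have hprodW : (W.map fun w => w + 2).prod = (-1 : ℂ) ^ N * ((Φ.eval (-2) : ℤ) : ℂ) := by
    rw [hcastΦ, ← mul_assoc, hone, one_mul]
  -- res Φ Ψ
  have hresΦΨ : res Φ Ψ = (W.map fun w => Polynomial.aeval w Ψ).prod := by
    rw [res, ← hΦC, ← hW]
  -- assemble
  rw [hres, hψ1, Multiset.map_congr rfl (fun w _ => hinner w),
    show (fun w : ℂ => (w + 2) * (Polynomial.aeval w Ψ) ^ 2) =
      fun w => (fun w : ℂ => w + 2) w * (fun w : ℂ => (Polynomial.aeval w Ψ) ^ 2) w from rfl,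
    Multiset.prod_map_mul, Multiset.prod_map_pow, hprodW, hresΦΨ]
  ring
end

section
/- For positive integers k > m ≥ 1, the resultant of the k-th and m-th cyclotomic trace polynomials CT_k and CT_m equals ±1 if and only if the ratio k/m is not a power of a prime (in particular if m does not divide k). -/
/-- `F` is the k-th cyclotomic trace polynomial: for k ≥ 3 it is the unique monic polynomial
of degree φ(k)/2 with C_k(z) = z^{φ(k)/2} F(z+z⁻¹); by convention CT₁(w) = w−2 and
CT₂(w) = w+2 (coming from (z−1)² and (z+1)²). -/
def IsCycloTrace (k : ℕ) (F : Polynomial ℤ) : Prop :=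
  if k = 1 then F = Polynomial.X - Polynomial.C 2
  else if k = 2 then F = Polynomial.X + Polynomial.C 2
  else F.Monic ∧ F.natDegree = Nat.totient k / 2 ∧
    ∀ z : ℂ, z ≠ 0 → Polynomial.aeval z (Polynomial.cyclotomic k ℤ) =
      z ^ (Nat.totient k / 2) * Polynomial.aeval (z + z⁻¹) F

open Polynomial Finset

lemma prim_image (k : ℕ) [NeZero k] {ω : ℂ} (hω : IsPrimitiveRoot ω k) :
    primitiveRoots k ℂ = Finset.univ.image (fun u : (ZMod k)ˣ => ω ^ (u : ZMod k).val) := by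
  have hk0 : 0 < k := Nat.pos_of_ne_zero (NeZero.ne k)
  ext ζ
  simp only [Finset.mem_image, Finset.mem_univ, true_and, mem_primitiveRoots hk0]
  constructor
  · intro hζ
    obtain ⟨i, hik, hi⟩ := hω.eq_pow_of_pow_eq_one hζ.pow_eq_one
    have hcop : i.Coprime k := (hω.pow_iff_coprime hk0 i).1 (hi ▸ hζ)
    refine ⟨ZMod.unitOfCoprime i hcop, ?_⟩
    have : ((ZMod.unitOfCoprime i hcop : ZMod k) : ZMod k).val = i % k := by
      simp [ZMod.unitOfCoprime, ZMod.val_natCast]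
    rw [this, Nat.mod_eq_of_lt hik, hi]
  · rintro ⟨u, rfl⟩
    exact (hω.pow_iff_coprime hk0 _).2 (ZMod.val_coe_unit_coprime u)

lemma prim_reindex (k : ℕ) [NeZero k] {ω : ℂ} (hω : IsPrimitiveRoot ω k) (f : ℂ → ℂ) :
    ∏ ζ ∈ primitiveRoots k ℂ, f ζ = ∏ u : (ZMod k)ˣ, f (ω ^ (u : ZMod k).val) := by
  rw [prim_image k hω, Finset.prod_image]
  intro u _ v _ huv
  have := hω.pow_inj (ZMod.val_lt _) (ZMod.val_lt _) huv
  exact Units.ext (ZMod.val_injective _ this)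

lemma prod_comp_surj {G H : Type*} [Group G] [Group H] [Fintype G] [Fintype H] [DecidableEq H]
    (ψ : G →* H) (hs : Function.Surjective ψ) (f : H → ℂ) :
    ∏ u : G, f (ψ u) = (∏ v : H, f v) ^ (Fintype.card G / Fintype.card H) := by
  classical
  have hker : Nat.card ψ.ker = #(filter (fun u => ψ u = 1) univ) := by
    rw [Nat.card_eq_fintype_card, ← Fintype.card_subtype]
    exact Fintype.card_congr (Equiv.subtypeEquivRight (by simp [MonoidHom.mem_ker]))
  have hfiber : ∀ v : H, #(filter (fun u => ψ u = v) univ) = Fintype.card G / Fintype.card H := by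
    intro v
    obtain ⟨u₀, rfl⟩ := hs v
    have hcard : #(filter (fun u => ψ u = ψ u₀) univ) = #(filter (fun u => ψ u = 1) univ) := by
      apply Finset.card_bij (fun x _ => u₀⁻¹ * x)
      · intro a ha
        simp only [mem_filter, mem_univ, true_and] at ha ⊢
        simp [ha]
      · intro a _ b _ hab
        exact mul_left_cancel hab
      · intro b hb
        simp only [mem_filter, mem_univ, true_and] at hb
        exact ⟨u₀ * b, by simp [hb], by group⟩
    have h1 : Nat.card G = Nat.card (G ⧸ ψ.ker) * Nat.card ψ.ker :=
      Subgroup.card_eq_card_quotient_mul_card_subgroup ψ.ker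
    have h2 : Nat.card (G ⧸ ψ.ker) = Nat.card H :=
      Nat.card_congr (QuotientGroup.quotientKerEquivOfSurjective ψ hs).toEquiv
    rw [h2, hker] at h1
    have h3 : Fintype.card G = Fintype.card H * #(filter (fun u => ψ u = 1) univ) := by
      simpa [Nat.card_eq_fintype_card] using h1
    rw [hcard, h3, Nat.mul_div_cancel_left _ Fintype.card_pos]
  rw [Finset.prod_comp f (fun u => ψ u)]
  have himg : (univ : Finset G).image (fun u => ψ u) = univ :=
    Finset.image_univ_of_surjective hs
  rw [himg, ← Finset.prod_pow]
  exact Finset.prod_congr rfl fun v _ => by rw [hfiber v]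

lemma eval_cyclo_cast (n : ℕ) (x : ℤ) :
    ((eval x (cyclotomic n ℤ) : ℤ) : ℂ) = eval (x : ℂ) (cyclotomic n ℂ) := by
  rw [← map_cyclotomic_int n ℂ, eval_intCast_map]; rfl

lemma eval_cyclo_prod {n : ℕ} (hn : 0 < n) (x : ℂ) :
    eval x (cyclotomic n ℂ) = ∏ ζ ∈ primitiveRoots n ℂ, (x - ζ) := by
  rw [cyclotomic_eq_prod_X_sub_primitiveRoots (Complex.isPrimitiveRoot_exp n hn.ne'),
    eval_prod]
  simp

lemma prod_primroots_sub_one {e : ℕ} (he : 0 < e) :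
    ∏ ζ ∈ primitiveRoots e ℂ, (ζ - 1) =
      (-1) ^ Nat.totient e * ((eval 1 (cyclotomic e ℤ) : ℤ) : ℂ) := by
  rw [eval_cyclo_cast, Int.cast_one, eval_cyclo_prod he, ← Complex.card_primitiveRoots e,
    ← Finset.prod_const, ← Finset.prod_mul_distrib]
  exact Finset.prod_congr rfl fun ζ _ => by ring

lemma cyclo_eval_one_eq_one {n : ℕ} (hn : 2 ≤ n) (hnp : ¬ IsPrimePow n) :
    eval 1 (cyclotomic n ℤ) = 1 := by
  apply eval_one_cyclotomic_not_prime_pow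
  intro p hp c hc
  rcases c with _ | c
  · simp at hc; omega
  · exact hnp ⟨p, c + 1, hp.prime, Nat.succ_pos c, hc⟩

lemma not_isPrimePow_mul_of_dvd {e : ℕ} (he : 2 ≤ e) (hnp : ¬ IsPrimePow e) (d : ℕ) :
    ¬ IsPrimePow (e * d) := by
  rintro ⟨p, c, hp, hc, hpc⟩
  have hdvd : e ∣ p ^ c := hpc ▸ Dvd.intro d rfl
  obtain ⟨j, hj, rfl⟩ := (Nat.dvd_prime_pow hp.nat_prime).1 hdvd
  exact hnp ⟨p, j, hp, Nat.pos_of_ne_zero (fun h => by subst h; simp at he), rfl⟩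

lemma arith_A {e g : ℕ} (he : 2 ≤ e) (hg : 0 < g) :
    ∏ d ∈ g.divisors, (eval 1 (cyclotomic (e * d) ℤ)) ^ Nat.totient (g / d)
      = (eval 1 (cyclotomic e ℤ)) ^ (Nat.totient (e * g) / Nat.totient e) := by
  by_cases hpp : IsPrimePow e
  · obtain ⟨p, b, hp, hb, hpb⟩ := hpp
    have pp : p.Prime := hp.nat_prime
    haveI : Fact p.Prime := ⟨pp⟩
    set s := g.factorization p with hs
    set t := g / p ^ s with ht
    have hps_dvd : p ^ s ∣ g := Nat.ordProj_dvd g p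
    have hgt : p ^ s * t = g := Nat.ordProj_mul_ordCompl_eq_self g p
    have hpt : ¬ p ∣ t := Nat.not_dvd_ordCompl pp hg.ne'
    have ht0 : 0 < t := Nat.ordCompl_pos p hg.ne'
    have hcop_t : ∀ i : ℕ, Nat.Coprime (p ^ i) t :=
      fun i => Nat.Coprime.pow_left _ ((pp.coprime_iff_not_dvd).2 hpt)
    -- value of cyclotomic at prime powers
    have hce : eval 1 (cyclotomic e ℤ) = p := by
      rw [← hpb, show b = (b - 1) + 1 by omega, eval_one_cyclotomic_prime_pow]
    have hced : ∀ j : ℕ, eval 1 (cyclotomic (e * p ^ j) ℤ) = p := by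
      intro j
      rw [← hpb, ← pow_add, show b + j = (b + j - 1) + 1 by omega,
        eval_one_cyclotomic_prime_pow]
    -- split the product
    rw [← Finset.prod_filter_mul_prod_filter_not g.divisors (· ∣ p ^ s)]
    have h2 : ∏ d ∈ g.divisors.filter (fun d => ¬ d ∣ p ^ s),
        (eval 1 (cyclotomic (e * d) ℤ)) ^ Nat.totient (g / d) = 1 := by
      apply Finset.prod_eq_one
      intro d hd
      simp only [Finset.mem_filter, Nat.mem_divisors] at hd
      obtain ⟨⟨hdg, -⟩, hdns⟩ := hd
      have : ¬ IsPrimePow (e * d) := by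
        rintro ⟨q, c, hq, hc, hqc⟩
        have hqp : q = p := by
          have hpdvd : p ∣ q ^ c := by
            rw [hqc, ← hpb]
            exact Dvd.dvd.mul_right (dvd_pow_self p (by omega)) d
          exact ((Nat.prime_dvd_prime_iff_eq pp hq.nat_prime).1
            (pp.dvd_of_dvd_pow hpdvd)).symm
        subst hqp
        have hddvd : d ∣ q ^ c := hqc ▸ Dvd.intro_left e rfl
        obtain ⟨j, hj, rfl⟩ := (Nat.dvd_prime_pow pp).1 hddvd
        exact hdns (pow_dvd_pow q ((pp.pow_dvd_iff_le_factorization hg.ne').1 hdg))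
      rw [cyclo_eval_one_eq_one (by nlinarith [Nat.pos_of_mem_divisors (Nat.mem_divisors.2 ⟨hdg, hg.ne'⟩)]) this, one_pow]
    rw [h2, mul_one]
    have hfilter : g.divisors.filter (fun d => d ∣ p ^ s) = (p ^ s).divisors :=
      Nat.divisors_filter_dvd_of_dvd hg.ne' hps_dvd
    rw [hfilter, Nat.divisors_prime_pow pp, Finset.prod_map]
    simp only [Function.Embedding.coeFn_mk]
    have hgd : ∀ j ∈ Finset.range (s + 1), g / p ^ j = p ^ (s - j) * t := by
      intro j hj
      simp only [Finset.mem_range] at hj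
      have hgj : g = p ^ j * (p ^ (s - j) * t) := by
        rw [← mul_assoc, ← pow_add, Nat.add_sub_cancel' (by omega : j ≤ s), hgt]
      rw [hgj, Nat.mul_div_cancel_left _ (pow_pos pp.pos j)]
    have hLHS : ∏ j ∈ Finset.range (s + 1),
        (eval 1 (cyclotomic (e * p ^ j) ℤ)) ^ Nat.totient (g / p ^ j)
        = (p : ℤ) ^ (Nat.totient t * p ^ s) := by
      calc ∏ j ∈ Finset.range (s + 1),
          (eval 1 (cyclotomic (e * p ^ j) ℤ)) ^ Nat.totient (g / p ^ j)
          = ∏ j ∈ Finset.range (s + 1), (p : ℤ) ^ (Nat.totient t * Nat.totient (p ^ (s - j))) := by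
            apply Finset.prod_congr rfl
            intro j hj
            rw [hced j, hgd j hj, Nat.totient_mul (hcop_t (s - j)),
              Nat.mul_comm]
        _ = (p : ℤ) ^ (∑ j ∈ Finset.range (s + 1), Nat.totient t * Nat.totient (p ^ (s - j))) := by
            rw [← Finset.prod_pow_eq_pow_sum]
        _ = (p : ℤ) ^ (Nat.totient t * ∑ j ∈ Finset.range (s + 1), Nat.totient (p ^ (s - j))) := by
            rw [← Finset.mul_sum]
        _ = (p : ℤ) ^ (Nat.totient t * p ^ s) := by
            congr 1
            congr 1
            have hre : ∀ j ∈ Finset.range (s + 1),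
                Nat.totient (p ^ (s - j)) = (fun i => Nat.totient (p ^ i)) (s + 1 - 1 - j) := by
              intro j hj; simp
            rw [Finset.sum_congr rfl hre]
            refine (Finset.sum_range_reflect (fun i => Nat.totient (p ^ i)) (s + 1)).trans ?_
            have := Nat.sum_totient (p ^ s)
            rw [Nat.divisors_prime_pow pp, Finset.sum_map] at this
            simpa using this
    rw [hLHS, hce]
    congr 1
    have hEG : e * g = p ^ (b + s) * t := by rw [← hpb, ← hgt, pow_add]; ring
    have h3 : Nat.totient (e * g) = Nat.totient t * p ^ s * Nat.totient e := by
      rw [hEG, Nat.totient_mul (hcop_t _), ← hpb,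
        Nat.totient_prime_pow pp (by omega), Nat.totient_prime_pow pp hb]
      have hps : p ^ (b + s - 1) = p ^ s * p ^ (b - 1) := by
        rw [← pow_add]; congr 1; omega
      rw [hps]; ring
    rw [h3, Nat.mul_div_cancel _ (Nat.totient_pos.2 (by omega))]
  · have h1 : ∀ d ∈ g.divisors, (eval 1 (cyclotomic (e * d) ℤ)) ^ Nat.totient (g / d) = 1 := by
      intro d hd
      have hd0 : 0 < d := Nat.pos_of_mem_divisors hd
      have h2e : 2 ≤ e * d := by nlinarith
      rw [cyclo_eval_one_eq_one h2e (not_isPrimePow_mul_of_dvd he hpp d), one_pow]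
    rw [Finset.prod_eq_one h1, cyclo_eval_one_eq_one he hpp, one_pow]

lemma prod_pow_sub_one {k m : ℕ} (hk : 3 ≤ k) (hm : 0 < m) (hmk : m < k) :
    ∏ ζ ∈ primitiveRoots k ℂ, (ζ ^ m - 1) =
      ((eval 1 (cyclotomic (k / Nat.gcd k m) ℤ) : ℤ) : ℂ) ^
        (Nat.totient k / Nat.totient (k / Nat.gcd k m)) := by
  have hk0 : k ≠ 0 := by omega
  haveI : NeZero k := ⟨hk0⟩
  set g := Nat.gcd k m with hg
  set e := k / g with he
  have hgk : g ∣ k := Nat.gcd_dvd_left k m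
  have hgm : g ∣ m := Nat.gcd_dvd_right k m
  have hg0 : 0 < g := Nat.gcd_pos_of_pos_left _ (by omega)
  have hek : e ∣ k := Nat.div_dvd_of_dvd hgk
  have he0 : 0 < e := Nat.div_pos (Nat.le_of_dvd (by omega) hgk) hg0
  haveI : NeZero e := ⟨he0.ne'⟩
  set ω := Complex.exp (2 * Real.pi * Complex.I / k) with hωdef
  have hω : IsPrimitiveRoot ω k := Complex.isPrimitiveRoot_exp k hk0
  set η := ω ^ m with hηdef
  have horder : orderOf ω = k := (IsPrimitiveRoot.eq_orderOf hω).symm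
  have hη : IsPrimitiveRoot η e := by
    have h1 : orderOf η = e := by
      rw [hηdef, orderOf_pow' _ hm.ne', horder]
    exact h1 ▸ IsPrimitiveRoot.orderOf η
  have hordη : orderOf η = e := (IsPrimitiveRoot.eq_orderOf hη).symm
  set ψ := ZMod.unitsMap hek with hψ
  have hψs : Function.Surjective ψ := ZMod.unitsMap_surjective hek
  have key : ∀ u : (ZMod k)ˣ, (ω ^ (u : ZMod k).val) ^ m - 1 =
      η ^ ((ψ u : ZMod e)).val - 1 := by
    intro u
    have h1 : (ω ^ (u : ZMod k).val) ^ m = η ^ (u : ZMod k).val := by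
      rw [← pow_mul, ← pow_mul, mul_comm]
    have h2 : ((ψ u : ZMod e)).val = (u : ZMod k).val % e := by
      rw [hψ, ZMod.unitsMap]
      simp only [Units.coe_map, MonoidHom.coe_coe, ZMod.castHom_apply]
      rw [← ZMod.natCast_val, ZMod.val_natCast]
    rw [h1, h2, ← hordη, pow_mod_orderOf]
  calc ∏ ζ ∈ primitiveRoots k ℂ, (ζ ^ m - 1)
      = ∏ u : (ZMod k)ˣ, ((ω ^ (u : ZMod k).val) ^ m - 1) :=
        prim_reindex k hω (fun z => z ^ m - 1)
    _ = ∏ u : (ZMod k)ˣ, (η ^ ((ψ u : ZMod e)).val - 1) := Finset.prod_congr rfl fun u _ => key u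
    _ = (∏ v : (ZMod e)ˣ, (η ^ ((v : ZMod e)).val - 1)) ^
          (Fintype.card (ZMod k)ˣ / Fintype.card (ZMod e)ˣ) :=
        prod_comp_surj ψ hψs (fun v => η ^ ((v : ZMod e)).val - 1)
    _ = (∏ ζ ∈ primitiveRoots e ℂ, (ζ - 1)) ^ (Nat.totient k / Nat.totient e) := by
        rw [← prim_reindex e hη (fun z => z - 1), ZMod.card_units_eq_totient,
          ZMod.card_units_eq_totient]
    _ = ((eval 1 (cyclotomic e ℤ) : ℤ) : ℂ) ^ (Nat.totient k / Nat.totient e) := by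
        rw [prod_primroots_sub_one he0, mul_pow, ← pow_mul,
          Nat.mul_div_cancel' (Nat.totient_dvd_of_dvd hek)]
        rw [Even.neg_one_pow (Nat.totient_even (by omega)), one_mul]

noncomputable def Rp (k m : ℕ) : ℂ := ∏ ζ ∈ primitiveRoots k ℂ, eval ζ (cyclotomic m ℂ)

noncomputable def fval (k m : ℕ) : ℤ :=
  if m ∣ k then (eval 1 (cyclotomic (k / m) ℤ)) ^ Nat.totient m else 1

lemma cv_pos {n : ℕ} (hn : 2 ≤ n) : 0 < eval 1 (cyclotomic n ℤ) := by
  by_cases hpp : IsPrimePow n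
  · obtain ⟨p, b, hp, hb, rfl⟩ := hpp
    haveI : Fact p.Prime := ⟨hp.nat_prime⟩
    rw [show b = (b - 1) + 1 by omega, eval_one_cyclotomic_prime_pow]
    exact_mod_cast hp.nat_prime.pos
  · rw [cyclo_eval_one_eq_one hn hpp]; norm_num

lemma fval_pos {k m : ℕ} (hm : 0 < m) (hmk : m < k) : 0 < fval k m := by
  unfold fval
  split_ifs with h
  · have h2 : 2 ≤ k / m := by
      rcases h with ⟨c, rfl⟩
      rw [Nat.mul_div_cancel_left _ hm]
      by_contra hc
      interval_cases c <;> omega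
    exact pow_pos (cv_pos h2) _
  · norm_num

lemma prod_divisors_Rp {k m : ℕ} (hm : 0 < m) :
    ∏ d ∈ m.divisors, Rp k d = ∏ ζ ∈ primitiveRoots k ℂ, (ζ ^ m - 1) := by
  unfold Rp
  rw [Finset.prod_comm]
  apply Finset.prod_congr rfl
  intro ζ _
  rw [← eval_prod, prod_cyclotomic_eq_X_pow_sub_one hm ℂ]
  simp

lemma prod_divisors_fval {k m : ℕ} (hk : 3 ≤ k) (hm : 0 < m) (hmk : m < k) :
    ∏ d ∈ m.divisors, fval k d =
      (eval 1 (cyclotomic (k / Nat.gcd k m) ℤ)) ^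
        (Nat.totient k / Nat.totient (k / Nat.gcd k m)) := by
  set g := Nat.gcd k m with hgdef
  set e := k / g with hedef
  have hgk : g ∣ k := Nat.gcd_dvd_left k m
  have hgm : g ∣ m := Nat.gcd_dvd_right k m
  have hg0 : 0 < g := Nat.gcd_pos_of_pos_left _ (by omega)
  have heg : e * g = k := Nat.div_mul_cancel hgk
  have he2 : 2 ≤ e := by
    by_contra hc
    have : e ≤ 1 := by omega
    have : k ≤ g := by nlinarith
    have : g ≤ m := Nat.le_of_dvd hm hgm
    omega
  have step1 : ∏ d ∈ m.divisors, fval k d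
      = ∏ d ∈ m.divisors.filter (· ∣ k), (eval 1 (cyclotomic (k / d) ℤ)) ^ Nat.totient d := by
    rw [Finset.prod_filter]
    exact Finset.prod_congr rfl fun d _ => rfl
  have step2 : m.divisors.filter (· ∣ k) = g.divisors := by
    ext d
    simp only [Finset.mem_filter, Nat.mem_divisors]
    constructor
    · rintro ⟨⟨hdm, -⟩, hdk⟩
      exact ⟨Nat.dvd_gcd hdk hdm, hg0.ne'⟩
    · rintro ⟨hdg, -⟩
      exact ⟨⟨hdg.trans hgm, hm.ne'⟩, hdg.trans hgk⟩
  have step3 : ∀ d ∈ g.divisors, k / d = e * (g / d) := by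
    intro d hd
    obtain ⟨hdg, -⟩ := Nat.mem_divisors.1 hd
    rw [← heg, Nat.mul_div_assoc e hdg]
  have step4 : ∏ d ∈ g.divisors, (eval 1 (cyclotomic (k / d) ℤ)) ^ Nat.totient d
      = ∏ d ∈ g.divisors, (eval 1 (cyclotomic (e * d) ℤ)) ^ Nat.totient (g / d) := by
    rw [← Nat.prod_div_divisors g (fun d => (eval 1 (cyclotomic (e * d) ℤ)) ^ Nat.totient (g / d))]
    apply Finset.prod_congr rfl
    intro d hd
    obtain ⟨hdg, -⟩ := Nat.mem_divisors.1 hd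
    rw [step3 d hd, Nat.div_div_self hdg hg0.ne']
  rw [step1, step2, step4, arith_A he2 hg0, heg]

lemma Rp_eq {k : ℕ} (hk : 3 ≤ k) : ∀ m, 0 < m → m < k → Rp k m = (fval k m : ℂ) := by
  intro m
  induction m using Nat.strong_induction_on with
  | _ m ih =>
    intro hm hmk
    have hL : ∏ d ∈ m.divisors, Rp k d =
        ((eval 1 (cyclotomic (k / Nat.gcd k m) ℤ) : ℤ) : ℂ) ^
          (Nat.totient k / Nat.totient (k / Nat.gcd k m)) := by
      rw [prod_divisors_Rp hm, prod_pow_sub_one hk hm hmk]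
    have hR : ∏ d ∈ m.divisors, ((fval k d : ℤ) : ℂ) =
        ((eval 1 (cyclotomic (k / Nat.gcd k m) ℤ) : ℤ) : ℂ) ^
          (Nat.totient k / Nat.totient (k / Nat.gcd k m)) := by
      rw [← Int.cast_prod, prod_divisors_fval hk hm hmk, Int.cast_pow]
    have hsplit := Nat.insert_self_properDivisors hm.ne'
    have hnotmem : m ∉ m.properDivisors := Nat.self_notMem_properDivisors
    have hP : ∀ d ∈ m.properDivisors, Rp k d = (fval k d : ℂ) := by
      intro d hd
      obtain ⟨hdm, hdlt⟩ := Nat.mem_properDivisors.1 hd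
      exact ih d hdlt (Nat.pos_of_dvd_of_pos hdm hm) (hdlt.trans hmk)
    have hPne : ∏ d ∈ m.properDivisors, ((fval k d : ℤ) : ℂ) ≠ 0 := by
      apply Finset.prod_ne_zero_iff.2
      intro d hd
      obtain ⟨hdm, hdlt⟩ := Nat.mem_properDivisors.1 hd
      have := fval_pos (Nat.pos_of_dvd_of_pos hdm hm) (hdlt.trans hmk)
      simp only [ne_eq, Int.cast_eq_zero]
      omega
    rw [← hsplit, Finset.prod_insert hnotmem] at hL
    rw [← hsplit, Finset.prod_insert hnotmem] at hR
    rw [Finset.prod_congr rfl hP] at hL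
    rw [← hR] at hL
    exact mul_right_cancel₀ hPne hL

-- trace map injectivity up to inverse
lemma trace_eq_iff {ζ ξ : ℂ} (hζ : ζ ≠ 0) (hξ : ξ ≠ 0) (h : ζ + ζ⁻¹ = ξ + ξ⁻¹) :
    ζ = ξ ∨ ζ = ξ⁻¹ := by
  have key : (ζ - ξ) * (ζ - ξ⁻¹) = 0 := by
    have expand : (ζ - ξ) * (ζ - ξ⁻¹) = ζ * ((ζ + ζ⁻¹) - (ξ + ξ⁻¹)) := by
      field_simp
      ring
    rw [expand, h, sub_self, mul_zero]
  rcases mul_eq_zero.1 key with h1 | h1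
  · left; linear_combination h1
  · right; linear_combination h1

lemma prim_ne_zero {k : ℕ} (hk : 0 < k) {ζ : ℂ} (hζ : ζ ∈ primitiveRoots k ℂ) : ζ ≠ 0 :=
  (isPrimitiveRoot_of_mem_primitiveRoots hζ).ne_zero hk.ne'

lemma fiber_eq {k : ℕ} (hk : 3 ≤ k) {ξ : ℂ} (hξ : ξ ∈ primitiveRoots k ℂ) :
    (primitiveRoots k ℂ).filter (fun ζ => ζ + ζ⁻¹ = ξ + ξ⁻¹) = {ξ, ξ⁻¹} := by
  have hk0 : 0 < k := by omega
  have hξp := isPrimitiveRoot_of_mem_primitiveRoots hξ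
  have hξ0 : ξ ≠ 0 := hξp.ne_zero hk0.ne'
  ext ζ
  simp only [Finset.mem_filter, Finset.mem_insert, Finset.mem_singleton]
  constructor
  · rintro ⟨hζm, hζe⟩
    exact trace_eq_iff (prim_ne_zero hk0 hζm) hξ0 hζe
  · rintro (rfl | rfl)
    · exact ⟨hξ, rfl⟩
    · refine ⟨(mem_primitiveRoots hk0).2 hξp.inv, ?_⟩
      rw [inv_inv, add_comm]

lemma fiber_card {k : ℕ} (hk : 3 ≤ k) {ξ : ℂ} (hξ : ξ ∈ primitiveRoots k ℂ) :
    #((primitiveRoots k ℂ).filter (fun ζ => ζ + ζ⁻¹ = ξ + ξ⁻¹)) = 2 := by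
  rw [fiber_eq hk hξ]
  have hξp := isPrimitiveRoot_of_mem_primitiveRoots hξ
  have hne : ξ ≠ ξ⁻¹ := by
    intro h
    have h2 : ξ ^ 2 = 1 := by
      have hξ0 : ξ ≠ 0 := hξp.ne_zero (by omega)
      rw [pow_two]
      nth_rewrite 2 [h]
      exact mul_inv_cancel₀ hξ0
    have := (hξp.pow_eq_one_iff_dvd 2).1 h2
    have := Nat.le_of_dvd (by norm_num) this
    omega
  rw [Finset.card_insert_of_notMem (by simpa using hne), Finset.card_singleton]

lemma image_card {k : ℕ} (hk : 3 ≤ k) :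
    #((primitiveRoots k ℂ).image (fun ζ => ζ + ζ⁻¹)) = Nat.totient k / 2 := by
  have h := Finset.card_eq_sum_card_image (fun ζ : ℂ => ζ + ζ⁻¹) (primitiveRoots k ℂ)
  rw [Complex.card_primitiveRoots] at h
  have h2 : ∀ w ∈ (primitiveRoots k ℂ).image (fun ζ => ζ + ζ⁻¹),
      #((primitiveRoots k ℂ).filter (fun ζ => ζ + ζ⁻¹ = w)) = 2 := by
    intro w hw
    obtain ⟨ξ, hξ, rfl⟩ := Finset.mem_image.1 hw
    exact fiber_card hk hξ
  rw [Finset.sum_congr rfl h2, Finset.sum_const, smul_eq_mul] at h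
  omega

lemma roots_Fk {k : ℕ} (hk : 3 ≤ k) {Fk : Polynomial ℤ} (hmon : Fk.Monic)
    (hdeg : Fk.natDegree = Nat.totient k / 2)
    (hval : ∀ z : ℂ, z ≠ 0 → aeval z (cyclotomic k ℤ) =
      z ^ (Nat.totient k / 2) * aeval (z + z⁻¹) Fk) :
    (Fk.map (Int.castRingHom ℂ)).roots =
      ((primitiveRoots k ℂ).image (fun ζ => ζ + ζ⁻¹)).val := by
  have hk0 : 0 < k := by omega
  set W := (primitiveRoots k ℂ).image (fun ζ => ζ + ζ⁻¹) with hW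
  have hmapmon : (Fk.map (Int.castRingHom ℂ)).Monic := hmon.map _
  have hmapne : Fk.map (Int.castRingHom ℂ) ≠ 0 := hmapmon.ne_zero
  have hdegmap : (Fk.map (Int.castRingHom ℂ)).natDegree = Nat.totient k / 2 := by
    rw [hmon.natDegree_map, hdeg]
  have hroot : ∀ w ∈ W, IsRoot (Fk.map (Int.castRingHom ℂ)) w := by
    intro w hw
    obtain ⟨ζ, hζ, rfl⟩ := Finset.mem_image.1 hw
    have hζp := isPrimitiveRoot_of_mem_primitiveRoots hζ
    have hζ0 : ζ ≠ 0 := hζp.ne_zero hk0.ne'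
    have h1 := hval ζ hζ0
    have h2 : aeval ζ (cyclotomic k ℤ) = 0 := by
      rw [aeval_def, ← eval_map, algebraMap_int_eq, map_cyclotomic_int]
      exact hζp.isRoot_cyclotomic hk0
    rw [h2] at h1
    have h3 : aeval (ζ + ζ⁻¹) Fk = 0 := by
      rcases mul_eq_zero.1 h1.symm with h | h
      · exact absurd h (pow_ne_zero _ hζ0)
      · exact h
    rw [IsRoot, eval_map, ← algebraMap_int_eq, ← aeval_def]
    exact h3
  have hle : W.val ≤ (Fk.map (Int.castRingHom ℂ)).roots := by
    rw [Multiset.le_iff_count]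
    intro w
    by_cases hw : w ∈ W
    · have h1 : W.val.count w = 1 := by
        rw [Multiset.count_eq_one_of_mem W.nodup hw]
      rw [h1, count_roots]
      exact (rootMultiplicity_pos hmapne).2 (hroot w hw)
    · rw [Multiset.count_eq_zero_of_notMem (by simpa using hw)]
      omega
  have hcard : (Fk.map (Int.castRingHom ℂ)).roots.card ≤ W.val.card := by
    have := Polynomial.card_roots' (Fk.map (Int.castRingHom ℂ))
    rw [hdegmap] at this
    have hWc : W.val.card = Nat.totient k / 2 := by
      rw [← Finset.card_def, image_card hk]
    omega
  exact (Multiset.eq_of_le_of_card_le hle hcard).symm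

lemma Rp_def (k m : ℕ) : Rp k m = ∏ ζ ∈ primitiveRoots k ℂ, eval ζ (cyclotomic m ℂ) := rfl

lemma prod_prim_eq_one {k : ℕ} (hk : 3 ≤ k) : ∏ ζ ∈ primitiveRoots k ℂ, ζ = 1 := by
  have hk0 : 0 < k := by omega
  have h := eval_cyclo_prod hk0 (0 : ℂ)
  rw [← coeff_zero_eq_eval_zero, cyclotomic_coeff_zero ℂ (by omega : 1 < k)] at h
  have h2 : ∏ ζ ∈ primitiveRoots k ℂ, ((0 : ℂ) - ζ) =
      (-1) ^ #(primitiveRoots k ℂ) * ∏ ζ ∈ primitiveRoots k ℂ, ζ := by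
    rw [← Finset.prod_const, ← Finset.prod_mul_distrib]
    exact Finset.prod_congr rfl fun ζ _ => by ring
  rw [h2, Complex.card_primitiveRoots, Even.neg_one_pow (Nat.totient_even (by omega)),
    one_mul] at h
  exact h.symm

lemma res_sq {k : ℕ} (hk : 3 ≤ k) {Fk : Polynomial ℤ} (Fm : Polynomial ℤ)
    (hroots : (Fk.map (Int.castRingHom ℂ)).roots =
      ((primitiveRoots k ℂ).image (fun ζ => ζ + ζ⁻¹)).val) :
    (res Fk Fm) ^ 2 = ∏ ζ ∈ primitiveRoots k ℂ, aeval (ζ + ζ⁻¹) Fm := by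
  have h1 : res Fk Fm = ∏ w ∈ (primitiveRoots k ℂ).image (fun ζ => ζ + ζ⁻¹), aeval w Fm := by
    rw [res, hroots, Finset.prod_eq_multiset_prod]
  rw [Finset.prod_comp (fun w => (aeval w Fm : ℂ)) (fun ζ => ζ + ζ⁻¹)]
  have h2 : ∀ w ∈ (primitiveRoots k ℂ).image (fun ζ => ζ + ζ⁻¹),
      (aeval w Fm : ℂ) ^ #((primitiveRoots k ℂ).filter (fun ζ => ζ + ζ⁻¹ = w)) =
      (aeval w Fm : ℂ) ^ 2 := by
    intro w hw
    obtain ⟨ξ, hξ, rfl⟩ := Finset.mem_image.1 hw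
    rw [fiber_card hk hξ]
  rw [Finset.prod_congr rfl h2, Finset.prod_pow, ← h1]

lemma aeval_cyclo (m : ℕ) (z : ℂ) :
    aeval z (cyclotomic m ℤ) = eval z (cyclotomic m ℂ) := by
  rw [aeval_def, ← eval_map, algebraMap_int_eq, map_cyclotomic_int]

/-- For k > m ≥ 1, Res(CT_k, CT_m) = ±1 if and only if k/m is not a prime
power (in particular if m ∤ k). -/
theorem stmt_5 (k m : ℕ) (hm : 1 ≤ m) (hkm : m < k)
    (Fk Fm : Polynomial ℤ) (hFk : IsCycloTrace k Fk) (hFm : IsCycloTrace m Fm) :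
    (res Fk Fm = 1 ∨ res Fk Fm = -1) ↔ ¬ (m ∣ k ∧ IsPrimePow (k / m)) := by
  have hm0 : 0 < m := hm
  rcases eq_or_lt_of_le (show 2 ≤ k by omega) with hk2 | hk3
  · -- k = 2, m = 1
    have hk : k = 2 := hk2.symm
    have hm1 : m = 1 := by omega
    subst hk; subst hm1
    rw [IsCycloTrace, if_neg (by norm_num), if_pos rfl] at hFk
    rw [IsCycloTrace, if_pos rfl] at hFm
    subst hFk; subst hFm
    have hmap : (X + C (2 : ℤ)).map (Int.castRingHom ℂ) = X - C (-2 : ℂ) := by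
      rw [Polynomial.map_add, Polynomial.map_X, Polynomial.map_C]
      have h2 : ((Int.castRingHom ℂ) 2 : ℂ) = 2 := by norm_num
      rw [h2, map_neg, sub_neg_eq_add]
    have hres : res (X + C (2:ℤ)) (X - C (2:ℤ)) = -4 := by
      rw [res, hmap, roots_X_sub_C, Multiset.map_singleton, Multiset.prod_singleton,
        map_sub, aeval_X, aeval_C]
      norm_num
    rw [hres]
    constructor
    · intro h
      rcases h with h | h <;> norm_num at h
    · intro h
      exfalso
      exact h ⟨one_dvd 2, by simpa using Nat.prime_two.isPrimePow⟩
  · -- k ≥ 3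
    have hk : 3 ≤ k := hk3
    have hk0 : 0 < k := by omega
    rw [IsCycloTrace, if_neg (by omega), if_neg (by omega)] at hFk
    obtain ⟨hmon, hdeg, hval⟩ := hFk
    have hroots := roots_Fk hk hmon hdeg hval
    -- compute res^2 = (fval k m)^cm where cm = 2 for m ≤ 2 and 1 otherwise
    set cm : ℕ := if m ≤ 2 then 2 else 1 with hcm
    have hsq : (res Fk Fm) ^ 2 = ((fval k m : ℤ) : ℂ) ^ cm := by
      rw [res_sq hk Fm hroots]
      have hRp := Rp_eq hk m hm0 hkm
      rcases eq_or_lt_of_le hm with h1 | h2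
    -- m = 1
      · have hm1 : m = 1 := h1.symm
        subst hm1
        rw [IsCycloTrace, if_pos rfl] at hFm
        subst hFm
        have hpt : ∀ ζ ∈ primitiveRoots k ℂ,
            (aeval (ζ + ζ⁻¹) (X - C (2:ℤ)) : ℂ) = (eval ζ (cyclotomic 1 ℂ)) ^ 2 * ζ⁻¹ := by
          intro ζ hζ
          have hζ0 := prim_ne_zero hk0 hζ
          rw [cyclotomic_one]
          simp only [map_sub, aeval_X, aeval_C, eval_sub, eval_X, eval_one, map_ofNat]
          push_cast
          field_simp
          ring
        rw [Finset.prod_congr rfl hpt, Finset.prod_mul_distrib,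
          Finset.prod_inv_distrib, prod_prim_eq_one hk, inv_one, mul_one, Finset.prod_pow]
        rw [← Rp_def, hRp, hcm, if_pos (by norm_num)]
    -- m = 2
      · rcases eq_or_lt_of_le (Nat.succ_le_of_lt h2) with h3 | h4
        · have hm2 : m = 2 := h3.symm
          subst hm2
          rw [IsCycloTrace, if_neg (by norm_num), if_pos rfl] at hFm
          subst hFm
          have hpt : ∀ ζ ∈ primitiveRoots k ℂ,
              (aeval (ζ + ζ⁻¹) (X + C (2:ℤ)) : ℂ) = (eval ζ (cyclotomic 2 ℂ)) ^ 2 * ζ⁻¹ := by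
            intro ζ hζ
            have hζ0 := prim_ne_zero hk0 hζ
            rw [cyclotomic_two]
            simp only [map_add, aeval_X, aeval_C, eval_add, eval_X, eval_one, map_ofNat]
            push_cast
            field_simp
            ring
          rw [Finset.prod_congr rfl hpt, Finset.prod_mul_distrib,
            Finset.prod_inv_distrib, prod_prim_eq_one hk, inv_one, mul_one, Finset.prod_pow]
          rw [← Rp_def, hRp, hcm, if_pos (by norm_num)]
    -- m ≥ 3
        · have hm3 : 3 ≤ m := h4
          rw [IsCycloTrace, if_neg (by omega), if_neg (by omega)] at hFm
          obtain ⟨-, -, hvalm⟩ := hFm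
          have hpt : ∀ ζ ∈ primitiveRoots k ℂ,
              (aeval (ζ + ζ⁻¹) Fm : ℂ) =
                eval ζ (cyclotomic m ℂ) * (ζ ^ (Nat.totient m / 2))⁻¹ := by
            intro ζ hζ
            have hζ0 := prim_ne_zero hk0 hζ
            have h := hvalm ζ hζ0
            rw [aeval_cyclo] at h
            rw [h]
            field_simp
          rw [Finset.prod_congr rfl hpt, Finset.prod_mul_distrib,
            Finset.prod_inv_distrib, Finset.prod_pow, prod_prim_eq_one hk, one_pow,
            inv_one, mul_one]
          rw [← Rp_def, hRp, hcm, if_neg (by omega), pow_one]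
    -- now the equivalence
    constructor
    · rintro h ⟨hdvd, hpp⟩
      have hres2 : (res Fk Fm) ^ 2 = 1 := by
        rcases h with h | h <;> rw [h] <;> ring
      rw [hsq] at hres2
      have hZ : (fval k m) ^ cm = 1 := by
        have : (((fval k m) ^ cm : ℤ) : ℂ) = 1 := by push_cast; exact hres2
        exact_mod_cast this
      have hge : 2 ≤ fval k m := by
        obtain ⟨p, b, hp, hb, hpb⟩ := hpp
        have pp : p.Prime := hp.nat_prime
        haveI : Fact p.Prime := ⟨pp⟩
        have hc : eval 1 (cyclotomic (k / m) ℤ) = p := by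
          rw [← hpb, show b = (b - 1) + 1 by omega, eval_one_cyclotomic_prime_pow]
        have hp2 : (2 : ℤ) ≤ p := by exact_mod_cast pp.two_le
        rw [fval, if_pos hdvd, hc]
        calc (2 : ℤ) ≤ p := hp2
          _ = (p : ℤ) ^ 1 := (pow_one _).symm
          _ ≤ (p : ℤ) ^ Nat.totient m :=
            pow_le_pow_right₀ (by linarith) (Nat.totient_pos.2 hm0)
      have : 2 ≤ (fval k m) ^ cm := by
        calc (2 : ℤ) ≤ fval k m := hge
          _ = (fval k m) ^ 1 := (pow_one _).symm
          _ ≤ (fval k m) ^ cm := pow_le_pow_right₀ (by linarith) (by rw [hcm]; split_ifs <;> omega)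
      omega
    · intro hn
      have hf1 : fval k m = 1 := by
        rw [fval]
        split_ifs with hdvd
        · have hnp : ¬ IsPrimePow (k / m) := fun hp => hn ⟨hdvd, hp⟩
          have h2 : 2 ≤ k / m := by
            rcases hdvd with ⟨c, rfl⟩
            rw [Nat.mul_div_cancel_left _ hm0]
            by_contra hc
            interval_cases c <;> omega
          rw [cyclo_eval_one_eq_one h2 hnp, one_pow]
        · rfl
      have hres2 : (res Fk Fm) ^ 2 = 1 := by rw [hsq, hf1]; norm_num
      rw [pow_two] at hres2
      exact mul_self_eq_one_iff.1 hres2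
end

section
/- Let A and B be invertible n×n complex matrices with rank(A−B) = 1, let C = A⁻¹B, and suppose C r = c·r with c ≠ 1 a complex number and r a nonzero vector such that C v = v − ζ(v,r)r for all v, with respect to a nondegenerate A-invariant and B-invariant Hermitian form (·,·), where ζ = (1−c)/(r,r). Then ψ(z)/φ(z) = 1 + ζ·((zI − A)⁻¹ A r, r) as rational functions, where φ and ψ are the characteristic polynomials of A and B. -/
open Matrix Polynomial

lemma eval_charpoly'_stmt12 {n : ℕ} (A : Matrix (Fin n) (Fin n) ℂ) (z : ℂ) :
    A.charpoly.eval z = (z • (1 : Matrix (Fin n) (Fin n) ℂ) - A).det := by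
  rw [Matrix.charpoly, ← Polynomial.coe_evalRingHom, RingHom.map_det]
  congr 1
  ext i j
  simp [Matrix.charmatrix_apply, Matrix.smul_apply, Matrix.one_apply, Matrix.sub_apply,
    Matrix.diagonal_apply, apply_ite (Polynomial.eval z)]

/-- In a hypergeometric group ⟨A, B⟩ with invariant Hermitian form (·,·),
if C = A⁻¹B is the complex reflection C v = v − ζ(v,r)r with C r = c r, c ≠ 1 and
ζ = (1−c)/(r,r), then ψ(z)/φ(z) = 1 + ζ·((zI − A)⁻¹ A r, r) as rational functions. -/
theorem stmt_12 (n : ℕ) (A B : Matrix (Fin n) (Fin n) ℂ)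
    (hA : IsUnit A.det) (hB : IsUnit B.det) (hrank : (A - B).rank = 1)
    (h : (Fin n → ℂ) → (Fin n → ℂ) → ℂ)
    (hadd1 : ∀ u u' v, h (u + u') v = h u v + h u' v)
    (hsmul1 : ∀ (a : ℂ) (u v), h (a • u) v = a * h u v)
    (hherm : ∀ u v, h u v = starRingEnd ℂ (h v u))
    (hnd : ∀ v, (∀ u, h u v = 0) → v = 0)
    (hAinv : ∀ u v, h (A.mulVec u) (A.mulVec v) = h u v)
    (hBinv : ∀ u v, h (B.mulVec u) (B.mulVec v) = h u v)
    (r : Fin n → ℂ) (hr : r ≠ 0) (c : ℂ) (hc : c ≠ 1)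
    (heig : (A⁻¹ * B).mulVec r = c • r)
    (hrr : h r r ≠ 0)
    (ζ : ℂ) (hζ : ζ = (1 - c) / h r r)
    (hrefl : ∀ v, (A⁻¹ * B).mulVec v = v - (ζ * h v r) • r) :
    ∀ z : ℂ, A.charpoly.eval z ≠ 0 →
      B.charpoly.eval z / A.charpoly.eval z =
        1 + ζ * h ((z • (1 : Matrix (Fin n) (Fin n) ℂ) - A)⁻¹.mulVec (A.mulVec r)) r := by
  classical
  -- the linear functional v ↦ h v r
  set L : (Fin n → ℂ) →ₗ[ℂ] ℂ :=
    { toFun := fun v => h v r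
      map_add' := fun u u' => hadd1 u u' r
      map_smul' := fun a u => hsmul1 a u r } with hL
  have hLexp : ∀ v : Fin n → ℂ, h v r = ∑ j, v j * h (Pi.single j 1) r := by
    intro v
    have e : ∀ x : Fin n, (fun j => if x = j then (1:ℂ) else 0) = Pi.single x 1 := by
      intro x; funext j; simp [Pi.single_apply, eq_comm]
    have := LinearMap.pi_apply_eq_sum_univ L v
    simp only [hL, smul_eq_mul, LinearMap.coe_mk, AddHom.coe_mk] at this
    simpa [e] using this
  set s : Fin n → ℂ := fun j => ζ * h (Pi.single j 1) r with hs
  -- matrix form of the reflection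
  have hC : A⁻¹ * B = 1 - vecMulVec r s := by
    ext i j
    have := congrFun (hrefl (Pi.single j 1)) i
    simp only [Matrix.mulVec_single, mul_one, MulOpposite.op_one, one_smul, Matrix.col_apply] at this
    rw [this]
    simp [vecMulVec_apply, Matrix.one_apply, Matrix.sub_apply, hs,
      Pi.sub_apply, Pi.smul_apply, smul_eq_mul, Pi.single_apply]
    ring
  have hBeq : B = A * (1 - vecMulVec r s) := by
    rw [← hC, Matrix.mul_nonsing_inv_cancel_left _ _ hA]
  intro z hz
  set Z : Matrix (Fin n) (Fin n) ℂ := z • 1 - A with hZ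
  have hdetZ : A.charpoly.eval z = Z.det := eval_charpoly'_stmt12 A z
  have hZu : IsUnit Z.det := by rw [← hdetZ]; exact isUnit_iff_ne_zero.mpr hz
  have hmv : ∀ (M : Matrix (Fin n) (Fin n) ℂ) (u : Fin n → ℂ),
      M * vecMulVec u s = vecMulVec (M.mulVec u) s := by
    intro M u
    ext i j
    simp [Matrix.mul_apply, vecMulVec_apply, Matrix.mulVec, dotProduct,
      Finset.sum_mul, mul_assoc]
  have key : z • (1 : Matrix (Fin n) (Fin n) ℂ) - B
      = Z * (1 + vecMulVec (Z⁻¹.mulVec (A.mulVec r)) s) := by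
    rw [Matrix.mul_add, mul_one, hmv Z _, Matrix.mulVec_mulVec,
      Matrix.mul_nonsing_inv _ hZu, Matrix.one_mulVec,
      hBeq, Matrix.mul_sub, mul_one, hmv A r]
    rw [hZ]; abel
  have hψ : B.charpoly.eval z = Z.det * (1 + s ⬝ᵥ Z⁻¹.mulVec (A.mulVec r)) := by
    rw [eval_charpoly'_stmt12 B z, key, Matrix.det_mul]
    congr 1
    rw [vecMulVec_eq Unit, Matrix.det_one_add_replicateCol_mul_replicateRow]
  have hsd : s ⬝ᵥ Z⁻¹.mulVec (A.mulVec r) = ζ * h (Z⁻¹.mulVec (A.mulVec r)) r := by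
    rw [hLexp (Z⁻¹.mulVec (A.mulVec r))]
    simp only [dotProduct, hs, Finset.mul_sum]
    exact Finset.sum_congr rfl fun j _ => by ring
  rw [hψ, hdetZ, hsd]
  exact mul_div_cancel_left₀ _ (by rw [← hdetZ]; exact hz)
end

section
/- With A-basis {A^{i−1} r} of the hypergeometric lattice L(φ, ψ), the Gram matrix entries are (A^{i−1} r, A^{j−1} r) = ξ_{|i−j|}, where ξ_0 = 2 and the ξ_i ∈ ℤ are defined by the expansion ψ(z)/φ(z) = 1 + Σ_{i≥1} ξ_i z^{−i} at z = ∞. -/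
noncomputable def companion (n : ℕ) (f : Polynomial ℤ) : Matrix (Fin n) (Fin n) ℚ :=
  Matrix.of fun i j =>
    (if (i : ℕ) = (j : ℕ) + 1 then 1 else 0) +
      (if (j : ℕ) = n - 1 then -((f.coeff (i : ℕ) : ℤ) : ℚ) else 0)

lemma companion_mulVec (N : ℕ) (hN : 0 < N) (f : Polynomial ℤ) (v : Fin (2*N) → ℚ)
    (i : Fin (2*N)) :
    (companion (2*N) f).mulVec v i =
      (if h : 0 < (i:ℕ) then v ⟨(i:ℕ)-1, by omega⟩ else 0)
        - ((f.coeff (i:ℕ) : ℤ):ℚ) * v ⟨2*N-1, by omega⟩ := by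
  have h1 : (companion (2*N) f).mulVec v i = ∑ j : Fin (2*N),
      ((if (i:ℕ) = (j:ℕ)+1 then (1:ℚ) else 0) +
        (if (j:ℕ) = 2*N-1 then -((f.coeff (i:ℕ) : ℤ):ℚ) else 0)) * v j := by
    simp [Matrix.mulVec, dotProduct, companion]
  rw [h1]
  simp_rw [add_mul, Finset.sum_add_distrib, ite_mul, one_mul, zero_mul, neg_mul]
  have h2 : ∑ j : Fin (2*N), (if (j:ℕ) = 2*N-1 then -(((f.coeff (i:ℕ) : ℤ):ℚ) * v j) else 0)
      = -(((f.coeff (i:ℕ) : ℤ):ℚ) * v ⟨2*N-1, by omega⟩) := by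
    rw [Finset.sum_eq_single (⟨2*N-1, by omega⟩ : Fin (2*N))]
    · simp
    · intro b _ hb
      rw [if_neg]
      intro hb'; exact hb (Fin.ext hb')
    · simp
  rw [h2]
  by_cases hi : 0 < (i:ℕ)
  · rw [dif_pos hi]
    have h3 : ∑ j : Fin (2*N), (if (i:ℕ) = (j:ℕ)+1 then v j else 0)
        = v ⟨(i:ℕ)-1, by omega⟩ := by
      rw [Finset.sum_eq_single (⟨(i:ℕ)-1, by omega⟩ : Fin (2*N))]
      · rw [if_pos]; simp; omega
      · intro b _ hb
        rw [if_neg]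
        intro hb'; exact hb (Fin.ext (by simp; omega))
      · simp
    rw [h3]; ring
  · rw [dif_neg hi]
    have h3 : ∑ j : Fin (2*N), (if (i:ℕ) = (j:ℕ)+1 then v j else 0) = 0 := by
      apply Finset.sum_eq_zero
      intro b _
      rw [if_neg]; omega
    rw [h3]; ring

set_option maxHeartbeats 1600000 in
/-- With the A-basis {A^{i} r} of the hypergeometric lattice L(φ, ψ), the
Gram matrix entries satisfy (A^{i}r, A^{j}r) = ξ_{|i−j|}, where ξ₀ = 2 and the integers
ξᵢ are the Taylor coefficients of ψ(z)/φ(z) = 1 + Σ_{i≥1} ξᵢ z^{−i} at z = ∞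
(equivalently the coefficients of the power series ψ*(u)/φ*(u) in u = 1/z, where
φ* and ψ* are the reversed polynomials). -/
theorem stmt_15 (N : ℕ) (hN : 0 < N) (φ ψ : Polynomial ℤ)
    (hφm : φ.Monic) (hψm : ψ.Monic)
    (hφd : φ.natDegree = 2 * N) (hψd : ψ.natDegree = 2 * N)
    (hcop : IsCoprime (φ.map (Int.castRingHom ℚ)) (ψ.map (Int.castRingHom ℚ)))
    (hφap : ∀ z : ℂ, z ≠ 0 →
      z ^ (2 * N) * Polynomial.aeval z⁻¹ φ = -(Polynomial.aeval z φ))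
    (hψpal : ∀ z : ℂ, z ≠ 0 →
      z ^ (2 * N) * Polynomial.aeval z⁻¹ ψ = Polynomial.aeval z ψ)
    (r : Fin (2 * N) → ℚ) (hr : r ≠ 0)
    (hrefl : ((companion (2 * N) φ)⁻¹ * companion (2 * N) ψ).mulVec r = -r)
    (Bl : (Fin (2 * N) → ℚ) →ₗ[ℚ] (Fin (2 * N) → ℚ) →ₗ[ℚ] ℚ)
    (hsymm : ∀ u v, Bl u v = Bl v u)
    (hAinv : ∀ u v, Bl ((companion (2 * N) φ).mulVec u) ((companion (2 * N) φ).mulVec v)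
        = Bl u v)
    (hBinv : ∀ u v, Bl ((companion (2 * N) ψ).mulVec u) ((companion (2 * N) ψ).mulVec v)
        = Bl u v)
    (hnd : ∀ v, (∀ u, Bl u v = 0) → v = 0)
    (hnorm : Bl r r = 2)
    (ξ : ℕ → ℤ) (hξ0 : ξ 0 = 2)
    (hξ : ∀ i : ℕ, 1 ≤ i →
      PowerSeries.coeff (R := ℚ) i (((ψ.map (Int.castRingHom ℚ)).reverse : PowerSeries ℚ) *
        (((φ.map (Int.castRingHom ℚ)).reverse : PowerSeries ℚ))⁻¹) = (ξ i : ℚ)) :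
    ∀ i j : ℕ,
      Bl (((companion (2 * N) φ) ^ i).mulVec r) (((companion (2 * N) φ) ^ j).mulVec r)
        = (ξ (max i j - min i j) : ℚ) := by
  set A := companion (2*N) φ with hA
  set B := companion (2*N) ψ with hB
  set n1 : Fin (2*N) := ⟨2*N-1, by omega⟩ with hn1
  set c' : ℕ → ℚ := fun k => ((φ.coeff k : ℤ) : ℚ) with hc'
  set d' : ℕ → ℚ := fun k => ((ψ.coeff k : ℤ) : ℚ) with hd'
  set w : Fin (2*N) → ℚ := fun i => c' i - d' i with hw
  have hcn : c' (2*N) = 1 := by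
    simp only [hc']
    rw [← hφd, Polynomial.coeff_natDegree, hφm.leadingCoeff]; norm_num
  have hdn : d' (2*N) = 1 := by
    simp only [hd']
    rw [← hψd, Polynomial.coeff_natDegree, hψm.leadingCoeff]; norm_num
  have hAmv : ∀ (v : Fin (2*N) → ℚ) (i : Fin (2*N)), A.mulVec v i =
      (if h : 0 < (i:ℕ) then v ⟨(i:ℕ)-1, by omega⟩ else 0) - c' i * v n1 :=
    fun v i => companion_mulVec N hN φ v i
  have hBmv : ∀ (v : Fin (2*N) → ℚ) (i : Fin (2*N)), B.mulVec v i =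
      (if h : 0 < (i:ℕ) then v ⟨(i:ℕ)-1, by omega⟩ else 0) - d' i * v n1 :=
    fun v i => companion_mulVec N hN ψ v i
  have hBA : ∀ (v : Fin (2*N) → ℚ), B.mulVec v = A.mulVec v + (v n1) • w := by
    intro v; funext i
    simp only [Pi.add_apply, Pi.smul_apply, smul_eq_mul, hAmv, hBmv, hw]
    ring
  -- B r = -(A r)
  have hBr : B.mulVec r = -(A.mulVec r) := by
    by_cases hdet : IsUnit A.det
    · have h1 : A * A⁻¹ = 1 := Matrix.mul_nonsing_inv A hdet
      have : B.mulVec r = A.mulVec ((A⁻¹ * B).mulVec r) := by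
        rw [Matrix.mulVec_mulVec, ← mul_assoc, h1, one_mul]
      rw [this, hrefl, Matrix.mulVec_neg]
    · exfalso
      have h0 : A⁻¹ = 0 := Matrix.nonsing_inv_apply_not_isUnit A hdet
      rw [h0, zero_mul, Matrix.zero_mulVec] at hrefl
      exact hr (by simpa using hrefl.symm)
  -- A r componentwise
  have hAr : ∀ i, A.mulVec r i = (-(r n1)/2) * w i := by
    intro i
    have h1 := congrFun hBr i
    have h2 := congrFun (hBA r) i
    simp only [Pi.add_apply, Pi.smul_apply, smul_eq_mul, Pi.neg_apply] at h1 h2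
    rw [h2] at h1; linear_combination h1 / 2
  have hArv : A.mulVec r = (-(r n1)/2) • w := funext fun i => by
    rw [hAr i]; simp
  -- the invariance relation
  have hE : ∀ u v : Fin (2*N) → ℚ,
      (v n1) * Bl (A.mulVec u) w + (u n1) * Bl w (A.mulVec v)
        + (u n1) * ((v n1) * Bl w w) = 0 := by
    intro u v
    have h1 := hBinv u v
    have h2 := hAinv u v
    rw [hBA u, hBA v] at h1
    simp only [map_add, map_smul, LinearMap.add_apply, LinearMap.smul_apply,
      smul_eq_mul] at h1
    rw [← h2] at h1
    linarith
  set e : Fin (2*N) → ℚ := Pi.single n1 1 with he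
  have he1 : e n1 = 1 := by simp [he]
  set lam : ℚ := -(Bl w (A.mulVec e) + Bl w w) with hlam
  have hfunc0 : ∀ u, Bl (A.mulVec u) w = (u n1) * lam := by
    intro u
    have h1 := hE u e
    rw [he1] at h1
    simp only [hlam]; linarith
  set κ : ℚ := (-(r n1)/2) * lam with hκdef
  have hfunc : ∀ u, Bl u r = κ * u n1 := by
    intro u
    rw [← hAinv u r, hArv, map_smul, smul_eq_mul, hfunc0]
    ring
  have hκ : κ * r n1 = 2 := by rw [← hfunc r, hnorm]
  -- the sequence g and S
  set g : ℕ → Fin (2*N) → ℚ := fun k => (A^k).mulVec (κ • (A.mulVec r)) with hg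
  set S : ℕ → ℚ := fun m => if m = 0 then 2 else g (m-1) n1 with hS
  have hg0 : ∀ i, g 0 i = d' i - c' i := by
    intro i
    simp only [hg, pow_zero, Matrix.one_mulVec, Pi.smul_apply, smul_eq_mul]
    rw [hAr i]
    have : κ * (-(r n1)/2 * w i) = -(κ * r n1)/2 * w i := by ring
    rw [this, hκ, hw]; ring
  have hgsucc : ∀ k, g (k+1) = A.mulVec (g k) := by
    intro k
    simp only [hg, pow_succ']
    rw [← Matrix.mulVec_mulVec]
  have hgtop : ∀ k, g k n1 = S (k+1) := by intro k; simp [hS]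
  -- closed form for g
  have hclosed : ∀ k, ∀ i : Fin (2*N), g k i =
      (if k ≤ (i:ℕ) then d' ((i:ℕ) - k) - c' ((i:ℕ) - k) else 0)
        - ∑ t ∈ Finset.range k,
            (if k - 1 - t ≤ (i:ℕ) then c' ((i:ℕ) - (k - 1 - t)) else 0) * S (t+1) := by
    intro k
    induction k with
    | zero => intro i; simp [hg0 i]
    | succ k ih =>
      intro i
      rw [hgsucc k, hAmv (g k) i, hgtop k, Finset.sum_range_succ]
      have hlast : (if k + 1 - 1 - k ≤ (i:ℕ) then c' ((i:ℕ) - (k + 1 - 1 - k)) else 0)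
          * S (k+1) = c' (i:ℕ) * S (k+1) := by
        rw [if_pos (by omega)]
        congr 2
        omega
      rw [hlast]
      by_cases hi : 0 < (i:ℕ)
      · rw [dif_pos hi, ih ⟨(i:ℕ)-1, by omega⟩]
        have e1 : (if k ≤ (i:ℕ) - 1 then d' ((i:ℕ) - 1 - k) - c' ((i:ℕ) - 1 - k) else 0)
            = (if k + 1 ≤ (i:ℕ) then d' ((i:ℕ) - (k+1)) - c' ((i:ℕ) - (k+1)) else 0) := by
          by_cases h : k + 1 ≤ (i:ℕ)
          · rw [if_pos (by omega), if_pos h]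
            congr 2 <;> omega
          · rw [if_neg (by omega), if_neg h]
        have e2 : ∑ t ∈ Finset.range k,
              (if k - 1 - t ≤ ((⟨(i:ℕ)-1, by omega⟩ : Fin (2*N)):ℕ)
                then c' (((⟨(i:ℕ)-1, by omega⟩ : Fin (2*N)):ℕ) - (k - 1 - t)) else 0) * S (t+1)
            = ∑ t ∈ Finset.range k,
              (if k + 1 - 1 - t ≤ (i:ℕ) then c' ((i:ℕ) - (k + 1 - 1 - t)) else 0) * S (t+1) := by
          apply Finset.sum_congr rfl
          intro t ht
          simp only [Finset.mem_range] at ht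
          congr 1
          by_cases h : k + 1 - 1 - t ≤ (i:ℕ)
          · rw [if_pos (by simp; omega), if_pos h]
            congr 1
            simp
            omega
          · rw [if_neg (by simp; omega), if_neg h]
        rw [e1, e2]
        ring
      · rw [dif_neg hi]
        have hi0 : (i:ℕ) = 0 := by omega
        rw [if_neg (by omega)]
        have e3 : ∑ t ∈ Finset.range k,
            (if k + 1 - 1 - t ≤ (i:ℕ) then c' ((i:ℕ) - (k + 1 - 1 - t)) else 0) * S (t+1) = 0 := by
          apply Finset.sum_eq_zero
          intro t ht
          simp only [Finset.mem_range] at ht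
          rw [if_neg (by omega)]
          ring
        rw [e3]
        ring
  -- Bl (A^k r) r = S k
  have hSk : ∀ k, Bl ((A^k).mulVec r) r = S k := by
    intro k
    cases k with
    | zero => simpa [hS, pow_zero, Matrix.one_mulVec] using hnorm
    | succ k =>
      have h1 : (A^(k+1)).mulVec r = (A^k).mulVec (A.mulVec r) := by
        rw [pow_succ, ← Matrix.mulVec_mulVec]
      rw [h1, hfunc]
      have h2 : κ * ((A^k).mulVec (A.mulVec r)) n1 = g k n1 := by
        simp only [hg, Matrix.mulVec_smul, Pi.smul_apply, smul_eq_mul]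
      rw [h2, hgtop]
  have hSkj : ∀ j k, Bl ((A^(j+k)).mulVec r) ((A^j).mulVec r) = S k := by
    intro j
    induction j with
    | zero => intro k; simpa [pow_zero, Matrix.one_mulVec] using hSk k
    | succ j ih =>
      intro k
      have hjk : j + 1 + k = (j + k) + 1 := by omega
      rw [hjk, pow_succ', pow_succ' A j, ← Matrix.mulVec_mulVec, ← Matrix.mulVec_mulVec,
        hAinv]
      exact ih k
  -- power series coefficients of reversed polynomials
  have hcφd : (φ.map (Int.castRingHom ℚ)).natDegree = 2*N := by
    rw [hφm.natDegree_map, hφd]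
  have hcψd : (ψ.map (Int.castRingHom ℚ)).natDegree = 2*N := by
    rw [hψm.natDegree_map, hψd]
  have hΦ : ∀ a, (PowerSeries.coeff (R := ℚ) a)
      (((φ.map (Int.castRingHom ℚ)).reverse : Polynomial ℚ) : PowerSeries ℚ)
      = (if a ≤ 2*N then c' (2*N - a) else 0) := by
    intro a
    rw [Polynomial.coeff_coe, Polynomial.coeff_reverse, hcφd]
    by_cases h : a ≤ 2*N
    · rw [if_pos h, Polynomial.revAt_le h, Polynomial.coeff_map]
      simp [hc']
    · rw [if_neg h, Polynomial.revAt_eq_self_of_lt (by omega), Polynomial.coeff_map]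
      rw [Polynomial.coeff_eq_zero_of_natDegree_lt (by omega)]
      simp
  have hΨ : ∀ a, (PowerSeries.coeff (R := ℚ) a)
      (((ψ.map (Int.castRingHom ℚ)).reverse : Polynomial ℚ) : PowerSeries ℚ)
      = (if a ≤ 2*N then d' (2*N - a) else 0) := by
    intro a
    rw [Polynomial.coeff_coe, Polynomial.coeff_reverse, hcψd]
    by_cases h : a ≤ 2*N
    · rw [if_pos h, Polynomial.revAt_le h, Polynomial.coeff_map]
      simp [hd']
    · rw [if_neg h, Polynomial.revAt_eq_self_of_lt (by omega), Polynomial.coeff_map]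
      rw [Polynomial.coeff_eq_zero_of_natDegree_lt (by omega)]
      simp
  -- main power series identity
  have hmain : (((φ.map (Int.castRingHom ℚ)).reverse : Polynomial ℚ) : PowerSeries ℚ)
        * PowerSeries.mk S
      = (((φ.map (Int.castRingHom ℚ)).reverse : Polynomial ℚ) : PowerSeries ℚ)
        + (((ψ.map (Int.castRingHom ℚ)).reverse : Polynomial ℚ) : PowerSeries ℚ) := by
    ext m
    rw [PowerSeries.coeff_mul, map_add, Finset.Nat.sum_antidiagonal_eq_sum_range_succ_mk]
    simp only [hΦ, hΨ, PowerSeries.coeff_mk]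
    rcases Nat.eq_zero_or_pos m with hm | hm
    · subst hm
      simp [hS, hcn, hdn]
      norm_num
    · obtain ⟨m', rfl⟩ : ∃ m', m = m' + 1 := ⟨m-1, by omega⟩
      rw [Finset.sum_range_succ]
      have hS0 : S (m' + 1 - (m' + 1)) = 2 := by simp [hS]
      rw [hS0]
      have hrefl2 : ∑ a ∈ Finset.range (m'+1),
            (if a ≤ 2*N then c' (2*N - a) else 0) * S (m' + 1 - a)
          = ∑ t ∈ Finset.range (m'+1),
            (if m' + 1 - 1 - t ≤ 2*N then c' (2*N - (m' + 1 - 1 - t)) else 0) * S (t+1) := by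
        rw [← Finset.sum_range_reflect
          (fun t => (if m' + 1 - 1 - t ≤ 2*N then c' (2*N - (m' + 1 - 1 - t)) else 0) * S (t+1))
          (m'+1)]
        apply Finset.sum_congr rfl
        intro a ha
        simp only [Finset.mem_range] at ha
        have h1 : m' + 1 - 1 - (m' + 1 - 1 - a) = a := by omega
        have h2 : m' + 1 - 1 - a + 1 = m' + 1 - a := by omega
        rw [h1, h2]
      rw [hrefl2, Finset.sum_range_succ]
      have hz : m' + 1 - 1 - m' = 0 := by omega
      rw [hz]
      simp only [Nat.sub_zero, if_pos (Nat.zero_le (2*N)), hcn, one_mul]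
      -- use closed form at i = n1
      have hgm : S (m' + 1) =
          (if m' ≤ (n1:ℕ) then d' ((n1:ℕ) - m') - c' ((n1:ℕ) - m') else 0)
            - ∑ t ∈ Finset.range m',
                (if m' - 1 - t ≤ (n1:ℕ) then c' ((n1:ℕ) - (m' - 1 - t)) else 0) * S (t+1) := by
        rw [← hgtop m', hclosed m' n1]
      have hn1v : (n1:ℕ) = 2*N-1 := rfl
      have eq1 : ∑ t ∈ Finset.range m',
            (if m' + 1 - 1 - t ≤ 2*N then c' (2*N - (m' + 1 - 1 - t)) else 0) * S (t+1)
          = ∑ t ∈ Finset.range m',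
            (if m' - 1 - t ≤ (n1:ℕ) then c' ((n1:ℕ) - (m' - 1 - t)) else 0) * S (t+1) := by
        apply Finset.sum_congr rfl
        intro t ht
        simp only [Finset.mem_range] at ht
        rw [hn1v]
        by_cases h : m' - t ≤ 2*N
        · rw [if_pos (by omega), if_pos (by omega)]
          congr 2
          omega
        · rw [if_neg (by omega), if_neg (by omega)]
      have eq2 : (if m' ≤ (n1:ℕ) then d' ((n1:ℕ) - m') - c' ((n1:ℕ) - m') else 0)
          = (if m'+1 ≤ 2*N then d' (2*N-(m'+1)) - c' (2*N-(m'+1)) else 0) := by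
        rw [hn1v]
        by_cases h : m'+1 ≤ 2*N
        · rw [if_pos (by omega), if_pos h]
          have e1 : 2*N - 1 - m' = 2*N - (m'+1) := by omega
          rw [e1]
        · rw [if_neg (by omega), if_neg h]
      rw [eq2] at hgm
      rw [eq1]
      by_cases h : m'+1 ≤ 2*N
      · rw [if_pos h] at hgm ⊢
        rw [if_pos h]
        linarith
      · rw [if_neg h] at hgm ⊢
        rw [if_neg h]
        linarith
  -- invert the power series
  have hconst : (PowerSeries.constantCoeff (R := ℚ))
      (((φ.map (Int.castRingHom ℚ)).reverse : Polynomial ℚ) : PowerSeries ℚ) = 1 := by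
    have h := hΦ 0
    rw [PowerSeries.coeff_zero_eq_constantCoeff] at h
    rw [h, if_pos (Nat.zero_le _), Nat.sub_zero, hcn]
  have hinv : (((φ.map (Int.castRingHom ℚ)).reverse : Polynomial ℚ) : PowerSeries ℚ)
      * (((φ.map (Int.castRingHom ℚ)).reverse : Polynomial ℚ) : PowerSeries ℚ)⁻¹ = 1 :=
    PowerSeries.mul_inv_cancel _ (by rw [hconst]; norm_num)
  have hSξ : ∀ k, S k = (ξ k : ℚ) := by
    intro k
    rcases Nat.eq_zero_or_pos k with hk | hk
    · subst hk
      rw [hξ0]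
      simp [hS]
    · have h3 : (((ψ.map (Int.castRingHom ℚ)).reverse : Polynomial ℚ) : PowerSeries ℚ)
          = (((φ.map (Int.castRingHom ℚ)).reverse : Polynomial ℚ) : PowerSeries ℚ)
            * (PowerSeries.mk S - 1) := by
        rw [mul_sub, hmain]
        ring
      have h2 : (((ψ.map (Int.castRingHom ℚ)).reverse : Polynomial ℚ) : PowerSeries ℚ)
          * ((((φ.map (Int.castRingHom ℚ)).reverse : Polynomial ℚ) : PowerSeries ℚ))⁻¹
          = PowerSeries.mk S - 1 := by
        rw [h3]
        calc (((φ.map (Int.castRingHom ℚ)).reverse : Polynomial ℚ) : PowerSeries ℚ)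
              * (PowerSeries.mk S - 1)
              * ((((φ.map (Int.castRingHom ℚ)).reverse : Polynomial ℚ) : PowerSeries ℚ))⁻¹
            = (PowerSeries.mk S - 1)
              * ((((φ.map (Int.castRingHom ℚ)).reverse : Polynomial ℚ) : PowerSeries ℚ)
                * ((((φ.map (Int.castRingHom ℚ)).reverse : Polynomial ℚ) : PowerSeries ℚ))⁻¹) := by
              ring
          _ = PowerSeries.mk S - 1 := by rw [hinv, mul_one]
      have h4 := hξ k hk
      rw [h2, map_sub, PowerSeries.coeff_mk, PowerSeries.coeff_one, if_neg (by omega)] at h4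
      linarith
  -- conclusion
  intro i j
  rcases le_total j i with h | h
  · have h1 := hSkj j (i - j)
    rw [show j + (i-j) = i by omega] at h1
    rw [h1, hSξ (i-j), show max i j - min i j = i - j by omega]
  · rw [hsymm]
    have h1 := hSkj i (j - i)
    rw [show i + (j-i) = j by omega] at h1
    rw [h1, hSξ (j-i), show max i j - min i j = j - i by omega]
end

section
/- Let F be an automorphism of an even lattice L preserving a nondegenerate Hermitian form on L⊗ℂ, and let λ ∈ S¹ be an eigenvalue of F such that F admits a cyclic vector. If the generalized eigenspace E(λ) has dimension m(λ) ≥ 2, then the eigenspace V(λ) = ker(F − λ) ∩ E(λ) is one-dimensional and the Hermitian form vanishes identically on V(λ). -/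
/-- Let F be an automorphism of an even lattice preserving a nondegenerate
Hermitian form on L⊗ℂ, λ ∈ S¹ an eigenvalue of F, and suppose F admits a cyclic vector.
If the generalized eigenspace E(λ) has dimension ≥ 2, then the eigenspace V(λ) is
one-dimensional and the Hermitian form vanishes identically on V(λ). -/
theorem stmt_16 (n : ℕ) (M : Matrix (Fin n) (Fin n) ℤ) (hM : IsUnit M.det)
    (Bil : Matrix (Fin n) (Fin n) ℤ) (hBsymm : Bil.IsSymm) (hBnd : Bil.det ≠ 0)
    (hBeven : ∀ v : Fin n → ℤ, ∃ m : ℤ, dotProduct v (Bil.mulVec v) = 2 * m)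
    (hMB : M.transpose * Bil * M = Bil)
    (Fc : Matrix (Fin n) (Fin n) ℂ) (hFc : Fc = M.map (Int.cast : ℤ → ℂ))
    (h : (Fin n → ℂ) → (Fin n → ℂ) → ℂ)
    (hadd1 : ∀ u u' v, h (u + u') v = h u v + h u' v)
    (hsmul1 : ∀ (a : ℂ) (u v), h (a • u) v = a * h u v)
    (hherm : ∀ u v, h u v = starRingEnd ℂ (h v u))
    (hnd : ∀ v, (∀ u, h u v = 0) → v = 0)
    (hinv : ∀ u v, h (Fc.mulVec u) (Fc.mulVec v) = h u v)
    (lam : ℂ) (hlam : ‖lam‖ = 1)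
    (heig : Module.End.HasEigenvalue (Matrix.mulVecLin Fc) lam)
    (r : Fin n → ℂ)
    (hcyc : Submodule.span ℂ (Set.range fun i : Fin n => (Fc ^ (i : ℕ)).mulVec r) = ⊤)
    (hdim : 2 ≤ Module.finrank ℂ
        (Module.End.maxGenEigenspace (Matrix.mulVecLin Fc) lam)) :
    Module.finrank ℂ (Module.End.eigenspace (Matrix.mulVecLin Fc) lam) = 1 ∧
    ∀ v ∈ Module.End.eigenspace (Matrix.mulVecLin Fc) lam,
      ∀ v' ∈ Module.End.eigenspace (Matrix.mulVecLin Fc) lam, h v v' = 0 := by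
  clear hM hBsymm hBnd hBeven hMB hFc hnd
  set T := Matrix.mulVecLin Fc with hT
  have hlam0 : lam ≠ 0 := fun h0 => by simp [h0] at hlam
  have hmc : lam * starRingEnd ℂ lam = 1 := by
    rw [Complex.mul_conj]
    norm_cast
    rw [Complex.normSq_eq_norm_sq, hlam]; norm_num
  have hadd2 : ∀ u v v', h u (v + v') = h u v + h u v' := by
    intro u v v'
    rw [hherm u (v + v'), hadd1, map_add, ← hherm u v, ← hherm u v']
  have hsmul2 : ∀ (a : ℂ) (u v), h u (a • v) = starRingEnd ℂ a * h u v := by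
    intro a u v
    rw [hherm u (a • v), hsmul1, map_mul, ← hherm u v]
  have hfr : Module.finrank ℂ (Fin n → ℂ) = n := by simp
  have hn2 : 2 ≤ n := le_trans hdim (le_trans (Submodule.finrank_le _) hfr.le)
  obtain ⟨m, rfl⟩ : ∃ m, n = m + 1 := ⟨n - 1, by omega⟩
  set b0 : Fin (m+1) → (Fin (m+1) → ℂ) := fun i => (Fc ^ (i : ℕ)).mulVec r with hb0
  have hspan : ⊤ ≤ Submodule.span ℂ (Set.range b0) := hcyc.ge
  have hli : LinearIndependent ℂ b0 :=
    linearIndependent_of_top_le_span_of_card_eq_finrank hspan (by simp [hfr])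
  let b : Module.Basis (Fin (m+1)) ℂ (Fin (m+1) → ℂ) := Module.Basis.mk hli hspan
  have hb : ∀ i, b i = b0 i := fun i => by simp [b]
  have hTb : ∀ i : Fin m, T (b i.castSucc) = b i.succ := by
    intro i
    rw [hb, hb]
    show Fc.mulVec ((Fc ^ ((i.castSucc : Fin (m+1)) : ℕ)).mulVec r)
        = (Fc ^ ((i.succ : Fin (m+1)) : ℕ)).mulVec r
    rw [Matrix.mulVec_mulVec, Fin.coe_castSucc, Fin.val_succ, pow_succ']
  -- kernel injectivity claim
  have hker : ∀ x ∈ Module.End.eigenspace T lam, b.repr x (Fin.last m) = 0 → x = 0 := by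
    intro x hx hlast
    have hx' : T x = lam • x := Module.End.mem_eigenspace_iff.mp hx
    set c := b.repr x with hc
    have hxs : x = ∑ i : Fin m, c i.castSucc • b i.castSucc := by
      have hsr := b.sum_repr x
      rw [← hsr]
      rw [Fin.sum_univ_castSucc]
      simp [← hc, hlast]
    have hTx : T x = ∑ i : Fin m, c i.castSucc • b i.succ := by
      conv_lhs => rw [hxs]
      rw [map_sum]
      simp only [map_smul, hTb]
    have hrec : ∀ j : Fin (m+1),
        lam * c j = ∑ i : Fin m, c i.castSucc * (if i.succ = j then 1 else 0) := by
      intro j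
      have h1 : b.repr (T x) j = b.repr (lam • x) j := by rw [hx']
      rw [hTx] at h1
      simp only [map_sum, map_smul, Module.Basis.repr_self, Finsupp.coe_finset_sum, Finset.sum_apply,
        Finsupp.coe_smul, Pi.smul_apply, Finsupp.single_apply, smul_eq_mul, ← hc,
        Finsupp.smul_apply] at h1
      exact h1.symm
    have hzero : ∀ j : Fin (m+1), c j = 0 := by
      intro j
      induction j using Fin.induction with
      | zero =>
        have h0 := hrec 0
        simp only [Fin.succ_ne_zero, if_false, mul_zero, Finset.sum_const_zero] at h0
        exact (mul_eq_zero.mp h0).resolve_left hlam0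
      | succ i ih =>
        have h0 := hrec i.succ
        simp only [Fin.succ_inj, mul_ite, mul_one, mul_zero, Finset.sum_ite_eq',
          Finset.mem_univ, if_true] at h0
        rw [ih, mul_eq_zero] at h0
        exact h0.resolve_left hlam0
    have : c = 0 := Finsupp.ext hzero
    have : b.repr x = b.repr 0 := by rw [map_zero, ← hc, this]
    exact b.repr.injective this
  -- finrank ≤ 1
  have hle : Module.finrank ℂ (Module.End.eigenspace T lam) ≤ 1 := by
    let φ : Module.End.eigenspace T lam →ₗ[ℂ] ℂ :=
      (Finsupp.lapply (Fin.last m)).comp (b.repr.toLinearMap.comp (Submodule.subtype _))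
    have hinj : Function.Injective φ := by
      rw [← LinearMap.ker_eq_bot, LinearMap.ker_eq_bot']
      intro x hx0
      exact Subtype.ext (hker x.1 x.2 hx0)
    calc Module.finrank ℂ (Module.End.eigenspace T lam) ≤ Module.finrank ℂ ℂ :=
          LinearMap.finrank_le_finrank_of_injective hinj
      _ = 1 := Module.finrank_self ℂ
  have hge : 1 ≤ Module.finrank ℂ (Module.End.eigenspace T lam) := by
    obtain ⟨v, hv⟩ := heig.exists_hasEigenvector
    have : Nontrivial (Module.End.eigenspace T lam) :=
      nontrivial_of_ne ⟨v, hv.1⟩ 0 (by simp [Subtype.ext_iff, hv.2])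
    exact Module.finrank_pos_iff.mpr this
  have heq1 : Module.finrank ℂ (Module.End.eigenspace T lam) = 1 := le_antisymm hle hge
  refine ⟨heq1, ?_⟩
  -- find u with S u = 0, u = S w'
  set S : Module.End ℂ (Fin (m+1) → ℂ) := T - lam • 1 with hS
  have hSapp : ∀ x, S x = T x - lam • x := fun x => by
    simp [hS, LinearMap.sub_apply, LinearMap.smul_apply]
  have hSmem : ∀ x, x ∈ Module.End.eigenspace T lam ↔ S x = 0 := by
    intro x
    rw [Module.End.mem_eigenspace_iff, hSapp, sub_eq_zero]
  have hnotle : ¬ Module.End.maxGenEigenspace T lam ≤ Module.End.eigenspace T lam := by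
    intro hle'
    have := Submodule.finrank_mono hle'
    omega
  obtain ⟨w, hwmem, hwnot⟩ := SetLike.not_le_iff_exists.mp hnotle
  obtain ⟨k, hk⟩ := (Module.End.mem_maxGenEigenspace T lam w).mp hwmem
  have hswne : S w ≠ 0 := fun h0 => hwnot ((hSmem w).mpr h0)
  have main : ∀ (k : ℕ) (w : Fin (m+1) → ℂ), (S ^ k) w = 0 → S w ≠ 0 →
      ∃ w', S (S w') = 0 ∧ S w' ≠ 0 := by
    intro k
    induction k with
    | zero =>
      intro w hw hsw
      rw [pow_zero, Module.End.one_apply] at hw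
      exact absurd (by rw [hw, map_zero]) hsw
    | succ k ih =>
      intro w hw hsw
      by_cases hss : S (S w) = 0
      · exact ⟨w, hss, hsw⟩
      · refine ih (S w) ?_ hss
        have : (S ^ k) (S w) = (S ^ (k+1)) w := by rw [pow_succ]; rfl
        rw [this, hw]
  obtain ⟨w', hw'1, hw'2⟩ := main k w hk hswne
  set u := S w' with hu
  have humem : u ∈ Module.End.eigenspace T lam := (hSmem u).mpr hw'1
  have hu1 : Fc.mulVec u = lam • u := by
    have := Module.End.mem_eigenspace_iff.mp humem
    rwa [hT, Matrix.mulVecLin_apply] at this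
  have hw1 : Fc.mulVec w' = lam • w' + u := by
    have h2 := hSapp w'
    rw [← hu, hT, Matrix.mulVecLin_apply] at h2
    rw [h2]
    abel
  have huu : h u u = 0 := by
    have key : h u w' = h u w' + lam * h u u := by
      conv_lhs => rw [← hinv u w']
      rw [hu1, hw1, hsmul1, hadd2, hsmul2, mul_add, ← mul_assoc, hmc, one_mul]
    have : lam * h u u = 0 := left_eq_add.mp key
    exact (mul_eq_zero.mp this).resolve_left hlam0
  intro v hv v' hv'
  have hone := (finrank_eq_one_iff_of_nonzero' (⟨u, humem⟩ : Module.End.eigenspace T lam)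
      (by simp [Subtype.ext_iff, hw'2])).mp heq1
  obtain ⟨a, ha⟩ := hone ⟨v, hv⟩
  obtain ⟨a', ha'⟩ := hone ⟨v', hv'⟩
  have hav : a • u = v := congrArg Subtype.val ha
  have hav' : a' • u = v' := congrArg Subtype.val ha'
  rw [← hav, ← hav', hsmul1, hsmul2, huu, mul_zero, mul_zero]
end
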